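/- arXiv:1608.03528 — 5 statements merged into one kernel-verified Lean document; each statement's English description precedes it below -/
import Mathlib

section
/- Let f be holomorphic on the open disk O(ζ₀, δ) centered at a point ζ₀ of the unit circle 𝕋 with radius δ > 0. If there is a sequence (ζ_k) in 𝕋 \ {ζ₀} with ζ_k → ζ₀ and |f(ζ_k)| = 1 for all k, then f maps O(ζ₀, δ) ∩ 𝕋 into 𝕋. -/
open Complex Filter

private lemma conj_reflect_differentiableAt {f : ℂ → ℂ} {z : ℂ}
    (h : DifferentiableAt ℂ f ((starRingEnd ℂ) z)) :
    DifferentiableAt ℂ (fun w => (starRingEnd ℂ) (f ((starRingEnd ℂ) w))) z := by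
  obtain ⟨f', hf'⟩ : ∃ f', HasDerivAt f f' ((starRingEnd ℂ) z) := ⟨_, h.hasDerivAt⟩
  refine HasDerivAt.differentiableAt (f' := (starRingEnd ℂ) f') ?_
  rw [hasDerivAt_iff_isLittleO] at hf' ⊢
  have hc : Filter.Tendsto (starRingEnd ℂ) (nhds z) (nhds ((starRingEnd ℂ) z)) :=
    (Complex.continuous_conj).tendsto z
  have h2 := hf'.comp_tendsto hc
  refine Asymptotics.isLittleO_norm_norm.mp (h2.norm_norm.congr (fun w => ?_) (fun w => ?_))
  · rw [← RCLike.norm_conj]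
    congr 1
    simp only [Function.comp, map_sub, map_mul, smul_eq_mul, Complex.conj_conj]
  · rw [← RCLike.norm_conj]
    congr 1
    simp only [Function.comp, map_sub, Complex.conj_conj]

private lemma second_factor_diff {f : ℂ → ℂ} {ζ₀ w : ℂ}
    (h : DifferentiableAt ℂ f (ζ₀ * Complex.exp ((starRingEnd ℂ) w * I))) :
    DifferentiableAt ℂ (fun u => (starRingEnd ℂ) (f (ζ₀ * Complex.exp ((starRingEnd ℂ) u * I)))) w := by
  have key : ∀ u : ℂ, (starRingEnd ℂ) ((starRingEnd ℂ) ζ₀ * Complex.exp (-(u * I)))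
      = ζ₀ * Complex.exp ((starRingEnd ℂ) u * I) := by
    intro u
    rw [map_mul, Complex.conj_conj, ← Complex.exp_conj]
    congr 1
    simp [map_neg, map_mul, Complex.conj_I]
  have hψ : DifferentiableAt ℂ (fun u : ℂ => (starRingEnd ℂ) ζ₀ * Complex.exp (-(u * I))) w :=
    ((differentiableAt_id.mul_const I).neg.cexp).const_mul _
  have h' : DifferentiableAt ℂ f ((starRingEnd ℂ) ((starRingEnd ℂ) ζ₀ * Complex.exp (-(w * I)))) := by
    rw [key]; exact h
  have hcomp := (conj_reflect_differentiableAt h').comp w hψ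
  exact hcomp.congr_of_eventuallyEq (Filter.Eventually.of_forall fun u => by
    simp only [Function.comp]; rw [key])

set_option maxHeartbeats 1000000 in
theorem unimodular_on_arc
    (ζ₀ : ℂ) (hζ₀ : ‖ζ₀‖ = 1) (δ : ℝ) (hδ : 0 < δ)
    (f : ℂ → ℂ) (hf : DifferentiableOn ℂ f (Metric.ball ζ₀ δ))
    (ζ : ℕ → ℂ) (hmem : ∀ k, ζ k ∈ Metric.ball ζ₀ δ)
    (hcirc : ∀ k, ‖ζ k‖ = 1) (hne : ∀ k, ζ k ≠ ζ₀)
    (hlim : Tendsto ζ atTop (nhds ζ₀))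
    (hval : ∀ k, ‖f (ζ k)‖ = 1) :
    ∀ z ∈ Metric.ball ζ₀ δ, ‖z‖ = 1 → ‖f z‖ = 1 := by
  intro z hz hz1
  have hζ₀0 : ζ₀ ≠ 0 := by
    intro h; rw [h, norm_zero] at hζ₀; norm_num at hζ₀
  -- representation of unit circle points via arg
  have hexp : ∀ u : ℂ, ‖u‖ = 1 → ζ₀ * Complex.exp (((u / ζ₀).arg : ℂ) * I) = u := by
    intro u hu
    have habs : ‖u / ζ₀‖ = 1 := by
      rw [norm_div]
      rw [hu, hζ₀, div_one]
    have h1 := Complex.norm_mul_exp_arg_mul_I (u / ζ₀)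
    rw [habs, Complex.ofReal_one, one_mul] at h1
    rw [h1]
    field_simp
  set t : ℝ := (z / ζ₀).arg with ht
  have hzt : ζ₀ * Complex.exp ((t : ℂ) * I) = z := hexp z hz1
  set tk : ℕ → ℝ := fun k => (ζ k / ζ₀).arg with htk
  have hk : ∀ k, ζ₀ * Complex.exp ((tk k : ℂ) * I) = ζ k := fun k => hexp (ζ k) (hcirc k)
  have htk0 : ∀ k, tk k ≠ 0 := by
    intro k h0
    apply hne k
    rw [← hk k, h0]
    simp
  -- norm squared computation on the circle
  have hns : ∀ s : ℝ, ‖ζ₀ * Complex.exp ((s : ℂ) * I) - ζ₀‖ ^ 2 = 2 - 2 * Real.cos s := by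
    intro s
    have he : ζ₀ * Complex.exp ((s : ℂ) * I) - ζ₀ = ζ₀ * (Complex.exp ((s : ℂ) * I) - 1) := by ring
    rw [he, norm_mul, hζ₀, one_mul, Complex.sq_norm, Complex.normSq_apply]
    simp only [Complex.sub_re, Complex.sub_im, Complex.one_re, Complex.one_im,
      Complex.exp_ofReal_mul_I_re, Complex.exp_ofReal_mul_I_im]
    nlinarith [Real.sin_sq_add_cos_sq s]
  have hball2 : ∀ s : ℝ, Real.cos t ≤ Real.cos s →
      ζ₀ * Complex.exp ((s : ℂ) * I) ∈ Metric.ball ζ₀ δ := by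
    intro s hs
    rw [Metric.mem_ball, dist_eq_norm]
    have h1 : ‖ζ₀ * Complex.exp ((t : ℂ) * I) - ζ₀‖ < δ := by
      rw [hzt, ← dist_eq_norm]; exact hz
    nlinarith [hns s, hns t, norm_nonneg (ζ₀ * Complex.exp ((s : ℂ) * I) - ζ₀),
      norm_nonneg (ζ₀ * Complex.exp ((t : ℂ) * I) - ζ₀)]
  set m : ℝ := min 0 t with hm
  set M : ℝ := max 0 t with hM
  have hcos : ∀ s ∈ Set.Icc m M, Real.cos t ≤ Real.cos s := by
    intro s hs
    have habs : |s| ≤ |t| := by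
      rcases le_total 0 t with h | h
      · rw [hm, hM, min_eq_left h, max_eq_right h] at hs
        rw [_root_.abs_of_nonneg hs.1, _root_.abs_of_nonneg h]; exact hs.2
      · rw [hm, hM, min_eq_right h, max_eq_left h] at hs
        rw [_root_.abs_of_nonpos hs.2, _root_.abs_of_nonpos h]; linarith [hs.1]
    have hπ : |t| ≤ Real.pi := Complex.abs_arg_le_pi _
    calc Real.cos t = Real.cos |t| := (Real.cos_abs t).symm
      _ ≤ Real.cos |s| := Real.cos_le_cos_of_nonneg_of_le_pi (abs_nonneg s) hπ habs
      _ = Real.cos s := Real.cos_abs s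
  -- the open set W where the reflected product is defined
  set W : Set ℂ := {w | ζ₀ * Complex.exp (w * I) ∈ Metric.ball ζ₀ δ ∧
      ζ₀ * Complex.exp ((starRingEnd ℂ) w * I) ∈ Metric.ball ζ₀ δ} with hW
  have hWopen : IsOpen W := by
    have h1 : Continuous fun w : ℂ => ζ₀ * Complex.exp (w * I) :=
      continuous_const.mul (Complex.continuous_exp.comp (continuous_id.mul continuous_const))
    have h2 : Continuous fun w : ℂ => ζ₀ * Complex.exp ((starRingEnd ℂ) w * I) :=
      continuous_const.mul
        (Complex.continuous_exp.comp (Complex.continuous_conj.mul continuous_const))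
    exact IsOpen.and (Metric.isOpen_ball.preimage h1) (Metric.isOpen_ball.preimage h2)
  have hKW : ∀ s ∈ Set.Icc m M, ((s : ℝ) : ℂ) ∈ W := by
    intro s hs
    have hb := hball2 s (hcos s hs)
    exact ⟨hb, by rwa [Complex.conj_ofReal]⟩
  -- thickening
  set K : Set ℂ := Complex.ofReal '' Set.Icc m M with hKdef
  have hKcomp : IsCompact K := (isCompact_Icc).image Complex.continuous_ofReal
  have hKsub : K ⊆ W := by rintro w ⟨s, hs, rfl⟩; exact hKW s hs
  obtain ⟨ε, hε, hthick⟩ := hKcomp.exists_thickening_subset_open hWopen hKsub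
  set a : ℝ := m - ε / 2 with ha
  set b : ℝ := M + ε / 2 with hb
  set U : Set ℂ := Complex.re ⁻¹' Set.Ioo a b ∩ Complex.im ⁻¹' Set.Ioo (-(ε / 2)) (ε / 2)
    with hUdef
  have hUopen : IsOpen U :=
    ((isOpen_Ioo).preimage Complex.continuous_re).inter
      ((isOpen_Ioo).preimage Complex.continuous_im)
  have hUconv : Convex ℝ U :=
    ((convex_Ioo a b).linear_preimage Complex.reLm).inter
      ((convex_Ioo _ _).linear_preimage Complex.imLm)
  have hmM : m ≤ M := min_le_max
  have hUsub : U ⊆ W := by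
    intro w hw
    apply hthick
    obtain ⟨hre, him⟩ := hw
    set s : ℝ := max m (min w.re M) with hsdef
    have hsK : s ∈ Set.Icc m M := ⟨le_max_left _ _, max_le hmM (min_le_right _ _)⟩
    have h1 : |w.re - s| < ε / 2 := by
      rcases le_total w.re m with h | h
      · have hs : s = m := by
          rw [hsdef, min_eq_left (le_trans h hmM), max_eq_left h]
        rw [hs, _root_.abs_of_nonpos (by linarith)]
        simp only [Set.mem_preimage, Set.mem_Ioo] at hre
        rw [ha] at hre
        linarith [hre.1]
      · rcases le_total w.re M with h2 | h2
        · have hs : s = w.re := by rw [hsdef, min_eq_left h2, max_eq_right h]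
          rw [hs, sub_self, abs_zero]; linarith
        · have hs : s = M := by rw [hsdef, min_eq_right h2, max_eq_right hmM]
          rw [hs, _root_.abs_of_nonneg (by linarith)]
          simp only [Set.mem_preimage, Set.mem_Ioo] at hre
          rw [hb] at hre
          linarith [hre.2]
    have h2 : |w.im| < ε / 2 := by
      simp only [Set.mem_preimage, Set.mem_Ioo] at him
      rw [abs_lt]; exact ⟨by linarith [him.1], him.2⟩
    have hdist : dist w ((s : ℝ) : ℂ) < ε := by
      rw [Complex.dist_eq]
      calc ‖w - (s : ℂ)‖ ≤ |(w - (s : ℂ)).re| + |(w - (s : ℂ)).im| :=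
            Complex.norm_le_abs_re_add_abs_im _
        _ = |w.re - s| + |w.im| := by simp
        _ < ε / 2 + ε / 2 := by linarith
        _ = ε := by ring
    rw [Metric.mem_thickening_iff]
    exact ⟨(s : ℂ), ⟨s, hsK, rfl⟩, hdist⟩
  -- the reflected product F
  set F : ℂ → ℂ := fun w => f (ζ₀ * Complex.exp (w * I)) *
      (starRingEnd ℂ) (f (ζ₀ * Complex.exp ((starRingEnd ℂ) w * I))) with hF
  have hFdiff : DifferentiableOn ℂ F W := by
    intro w hw
    apply DifferentiableAt.differentiableWithinAt
    have hφ : DifferentiableAt ℂ (fun w : ℂ => ζ₀ * Complex.exp (w * I)) w :=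
      ((differentiableAt_id.mul_const I).cexp).const_mul _
    have h1 : DifferentiableAt ℂ (fun w : ℂ => f (ζ₀ * Complex.exp (w * I))) w :=
      (hf.differentiableAt (Metric.isOpen_ball.mem_nhds hw.1)).comp w hφ
    have h2 := second_factor_diff (f := f) (ζ₀ := ζ₀) (w := w)
      (hf.differentiableAt (Metric.isOpen_ball.mem_nhds hw.2))
    exact h1.mul h2
  have hFan : AnalyticOnNhd ℂ F U := (hFdiff.analyticOnNhd hWopen).mono hUsub
  have hconst : AnalyticOnNhd ℂ (fun _ : ℂ => (1 : ℂ)) U := analyticOnNhd_const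
  -- F = 1 at the sequence points
  have hFk : ∀ k, F ((tk k : ℝ) : ℂ) = 1 := by
    intro k
    rw [hF]
    simp only [Complex.conj_ofReal]
    rw [hk k, Complex.mul_conj, Complex.normSq_eq_norm_sq, hval k]
    norm_num
  -- the sequence tends to 0 within ≠ 0
  have htlim : Tendsto (fun k => ((tk k : ℝ) : ℂ)) atTop (nhdsWithin 0 {0}ᶜ) := by
    have hdiv : Tendsto (fun k => ζ k / ζ₀) atTop (nhds 1) := by
      have := hlim.div_const ζ₀
      rwa [div_self hζ₀0] at this
    have harg : Tendsto tk atTop (nhds 0) := by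
      have hca : ContinuousAt Complex.arg 1 := Complex.continuousAt_arg Complex.one_mem_slitPlane
      have := hca.tendsto.comp hdiv
      rwa [Complex.arg_one] at this
    have hcplx : Tendsto (fun k => ((tk k : ℝ) : ℂ)) atTop (nhds 0) := by
      have := (Complex.continuous_ofReal.tendsto 0).comp harg
      simpa [Function.comp_def] using this
    refine tendsto_nhdsWithin_of_tendsto_nhds_of_eventually_within _ hcplx ?_
    exact Filter.Eventually.of_forall fun k => by
      simp only [Set.mem_compl_iff, Set.mem_singleton_iff, Complex.ofReal_eq_zero]
      exact htk0 k
  have hfreq : ∃ᶠ w in nhdsWithin (0 : ℂ) {0}ᶜ, F w = 1 :=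
    htlim.frequently (Filter.Frequently.of_forall hFk)
  have h0U : (0 : ℂ) ∈ U := by
    constructor
    · simp only [Set.mem_preimage, Complex.zero_re, Set.mem_Ioo]
      constructor
      · rw [ha]; have : m ≤ 0 := min_le_left 0 t; linarith
      · rw [hb]; have : (0 : ℝ) ≤ M := le_max_left 0 t; linarith
    · simp only [Set.mem_preimage, Complex.zero_im, Set.mem_Ioo]
      constructor <;> linarith
  have heq := hFan.eqOn_of_preconnected_of_frequently_eq hconst hUconv.isPreconnected h0U hfreq
  have htU : ((t : ℝ) : ℂ) ∈ U := by
    constructor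
    · simp only [Set.mem_preimage, Complex.ofReal_re, Set.mem_Ioo]
      constructor
      · rw [ha]; have : m ≤ t := min_le_right 0 t; linarith
      · rw [hb]; have : t ≤ M := le_max_right 0 t; linarith
    · simp only [Set.mem_preimage, Complex.ofReal_im, Set.mem_Ioo]
      constructor <;> linarith
  have hFt : F ((t : ℝ) : ℂ) = 1 := heq htU
  rw [hF] at hFt
  simp only [Complex.conj_ofReal] at hFt
  rw [hzt, Complex.mul_conj, Complex.normSq_eq_norm_sq] at hFt
  have : (‖f z‖ : ℝ) ^ 2 = 1 := by exact_mod_cast hFt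
  nlinarith [norm_nonneg (f z)]
end

section
/- Let f be a nonconstant holomorphic function on a domain containing points a and b with f(a) = f(b). Then for every sufficiently small ε > 0 there exist open Jordan neighborhoods W₁ of a and W₂ of b such that the restrictions f|_{W₁} and f|_{W₂} are proper holomorphic maps onto the disk f(a) + ε𝔻. -/
open Complex Metric
open scoped Topology

private lemma image_add_ball (v : ℂ) (r : ℝ) :
    (fun w : ℂ => v + w) '' Metric.ball 0 r = Metric.ball v r := by
  ext w
  simp only [Set.mem_image, Metric.mem_ball, dist_zero_right, dist_eq_norm]
  constructor
  · rintro ⟨u, hu, rfl⟩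
    simpa [add_sub_cancel_left] using hu
  · intro hw
    exact ⟨w - v, by simpa using hw, by ring⟩

private lemma image_pow_ball {n : ℕ} (hn : 0 < n) {s : ℝ} (hs : 0 ≤ s) :
    (fun w : ℂ => w ^ n) '' Metric.ball 0 s = Metric.ball 0 (s ^ n) := by
  ext v
  simp only [Set.mem_image, mem_ball_zero_iff]
  constructor
  · rintro ⟨w, hw, rfl⟩
    rw [norm_pow]
    exact pow_lt_pow_left₀ hw (norm_nonneg _) hn.ne'
  · intro hv
    obtain ⟨w, rfl⟩ := IsAlgClosed.exists_pow_nat_eq v hn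
    refine ⟨w, ?_, rfl⟩
    exact lt_of_pow_lt_pow_left₀ n hs (by rwa [← norm_pow])

private lemma aux_point (U : Set ℂ) (hU : IsOpen U) (hconn : IsConnected U)
    (f : ℂ → ℂ) (hf : DifferentiableOn ℂ f U)
    (hnc : ∃ z ∈ U, ∃ w ∈ U, f z ≠ f w)
    (a : ℂ) (ha : a ∈ U) :
    ∃ ε₀ > 0, ∀ ε : ℝ, 0 < ε → ε < ε₀ →
      ∃ W : Set ℂ, IsOpen W ∧ a ∈ W ∧ W ⊆ U ∧
        Nonempty (W ≃ₜ (Metric.ball (0:ℂ) 1)) ∧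
        f '' W = Metric.ball (f a) ε ∧
        (∀ K ⊆ Metric.ball (f a) ε, IsCompact K → IsCompact (W ∩ f ⁻¹' K)) := by
  have hfan : AnalyticOnNhd ℂ f U := hf.analyticOnNhd hU
  set F : ℂ → ℂ := fun z => f z - f a with hFdef
  have hF : AnalyticAt ℂ F a := (hfan a ha).sub analyticAt_const
  have hne : ¬ (∀ᶠ z in 𝓝 a, F z = 0) := by
    intro hev
    obtain ⟨z, hz, w, hw, hzw⟩ := hnc
    have heq : Set.EqOn f (fun _ => f a) U := by
      apply hfan.eqOn_of_preconnected_of_eventuallyEq analyticOnNhd_const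
        hconn.isPreconnected ha
      filter_upwards [hev] with x hx
      simpa [F, sub_eq_zero] using hx
    exact hzw (by rw [heq hz, heq hw])
  have hord : analyticOrderAt F a ≠ ⊤ := fun h => hne (analyticOrderAt_eq_top.mp h)
  obtain ⟨n, hn⟩ := WithTop.ne_top_iff_exists.mp hord
  obtain ⟨g, hg, hg0, hFg⟩ := hF.analyticOrderAt_eq_natCast.mp hn.symm
  have hn0 : 0 < n := by
    rcases Nat.eq_zero_or_pos n with h | h
    · exfalso
      subst h
      have h1 := hFg.self_of_nhds
      simp only [F, sub_self, pow_zero, one_smul] at h1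
      exact hg0 h1.symm
    · exact h
  -- an n-th root of g a
  set c : ℂ := Complex.exp (Complex.log (g a) / n) with hcdef
  have hc0 : c ≠ 0 := Complex.exp_ne_zero _
  have hncC : (n : ℂ) ≠ 0 := Nat.cast_ne_zero.mpr hn0.ne'
  have hcn : c ^ n = g a := by
    rw [hcdef, ← Complex.exp_nat_mul]
    rw [show (n : ℂ) * (Complex.log (g a) / n) = Complex.log (g a) by field_simp]
    exact Complex.exp_log hg0
  -- an analytic n-th root of g near a
  set h : ℂ → ℂ := fun z => c * Complex.exp ((n : ℂ)⁻¹ * Complex.log (g z / g a)) with hhdef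
  have hha : h a = c := by simp [hhdef, div_self hg0, Complex.log_one]
  have hdiv : AnalyticAt ℂ (fun z => g z / g a) a := hg.div analyticAt_const hg0
  have hmem : (fun z => g z / g a) a ∈ Complex.slitPlane := by
    simp [div_self hg0]
  have hh : AnalyticAt ℂ h a :=
    analyticAt_const.mul ((analyticAt_const.mul (hdiv.clog hmem)).cexp)
  have hgev : ∀ᶠ z in 𝓝 a, g z ≠ 0 := hg.continuousAt.eventually_ne hg0
  have hhg : ∀ᶠ z in 𝓝 a, h z ^ n = g z := by
    filter_upwards [hgev] with z hz
    have hu : g z / g a ≠ 0 := div_ne_zero hz hg0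
    rw [hhdef]
    simp only
    rw [mul_pow, hcn, ← Complex.exp_nat_mul]
    rw [show (n : ℂ) * ((n : ℂ)⁻¹ * Complex.log (g z / g a)) = Complex.log (g z / g a) by
      field_simp]
    rw [Complex.exp_log hu]
    field_simp
  set φ : ℂ → ℂ := fun z => (z - a) * h z with hφdef
  have hφa : φ a = 0 := by simp [hφdef]
  have hkey : ∀ᶠ z in 𝓝 a, f z = f a + φ z ^ n := by
    filter_upwards [hFg, hhg] with z h1 h2
    have h3 : f z - f a = ((z - a) * h z) ^ n := by
      rw [mul_pow, h2]
      simpa [F, smul_eq_mul] using h1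
    simp only [hφdef]
    linear_combination h3
  -- φ has nonzero strict derivative c at a
  obtain ⟨q, hq⟩ := hh
  have hφs : HasStrictDerivAt φ c a := by
    have h2 : HasStrictDerivAt (fun z => (z - a) * h z) _ a := HasStrictDerivAt.mul ((hasStrictDerivAt_id a).sub_const a) hq.hasStrictDerivAt
    rw [hφdef]
    convert h2 using 1
    simp [hha]
  have hsf := hφs.hasStrictFDerivAt_equiv hc0
  set Φ := hsf.toOpenPartialHomeomorph φ with hΦdef
  have hΦcoe : (Φ : ℂ → ℂ) = φ := hsf.toOpenPartialHomeomorph_coe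
  have haΦ : a ∈ Φ.source := hsf.mem_toOpenPartialHomeomorph_source
  have hmem_nhds : (Φ.source ∩ U ∩ {z | f z = f a + φ z ^ n}) ∈ 𝓝 a :=
    Filter.inter_mem (Filter.inter_mem (Φ.open_source.mem_nhds haΦ) (hU.mem_nhds ha)) hkey
  obtain ⟨r, hr0, hrsub⟩ := Metric.mem_nhds_iff.mp hmem_nhds
  have hball_src : Metric.ball a r ⊆ Φ.source := fun z hz => (hrsub hz).1.1
  have hball_U : Metric.ball a r ⊆ U := fun z hz => (hrsub hz).1.2
  have hball_key : ∀ z ∈ Metric.ball a r, f z = f a + φ z ^ n := fun z hz => (hrsub hz).2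
  have himg_open : IsOpen ((Φ : ℂ → ℂ) '' Metric.ball a r) :=
    Φ.isOpen_image_of_subset_source isOpen_ball hball_src
  have h0mem : (0:ℂ) ∈ (Φ : ℂ → ℂ) '' Metric.ball a r :=
    ⟨a, mem_ball_self hr0, by rw [hΦcoe]; exact hφa⟩
  obtain ⟨δ, hδ0, hδsub⟩ := Metric.isOpen_iff.mp himg_open 0 h0mem
  refine ⟨δ ^ n, pow_pos hδ0 n, ?_⟩
  intro ε hε0 hεδ
  set s : ℝ := ε ^ ((n : ℝ)⁻¹) with hsdef
  have hs0 : 0 < s := Real.rpow_pos_of_pos hε0 _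
  have hsn : s ^ n = ε := Real.rpow_inv_natCast_pow hε0.le hn0.ne'
  have hsδ : s < δ := by
    apply lt_of_pow_lt_pow_left₀ n hδ0.le
    rw [hsn]; exact hεδ
  have hballs : Metric.ball (0:ℂ) s ⊆ (Φ : ℂ → ℂ) '' Metric.ball a r :=
    subset_trans (ball_subset_ball hsδ.le) hδsub
  set W : Set ℂ := (Φ.source ∩ (Φ : ℂ → ℂ) ⁻¹' (Metric.ball 0 s)) ∩ Metric.ball a r with hWdef
  have hWopen : IsOpen W := (Φ.isOpen_inter_preimage isOpen_ball).inter isOpen_ball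
  have haW : a ∈ W :=
    ⟨⟨haΦ, by rw [Set.mem_preimage, hΦcoe, hφa]; exact mem_ball_self hs0⟩, mem_ball_self hr0⟩
  have hWsub : W ⊆ U := fun z hz => hball_U hz.2
  have hWsrc : W ⊆ Φ.source := fun z hz => hz.1.1
  have hWkey : ∀ z ∈ W, f z = f a + φ z ^ n := fun z hz => hball_key z hz.2
  have himgW : (Φ : ℂ → ℂ) '' W = Metric.ball (0:ℂ) s := by
    apply Set.Subset.antisymm
    · rintro w ⟨z, hz, rfl⟩
      exact hz.1.2
    · intro w hw
      obtain ⟨z, hzr, hzw⟩ := hballs hw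
      exact ⟨z, ⟨⟨hball_src hzr, by rw [Set.mem_preimage, hzw]; exact hw⟩, hzr⟩, hzw⟩
  have hst : Metric.ball (0:ℂ) s ⊆ Φ.target := by
    intro w hw
    obtain ⟨z, hz, rfl⟩ := hballs hw
    exact Φ.map_source (hball_src hz)
  -- the image of W under f
  have hfW : f '' W = Metric.ball (f a) ε := by
    have h1 : f '' W = ((fun w => f a + w ^ n) ∘ (Φ : ℂ → ℂ)) '' W := by
      apply Set.image_congr
      intro z hz
      simp only [Function.comp_apply, hΦcoe]
      exact hWkey z hz
    rw [h1, Set.image_comp, himgW,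
      show (fun w : ℂ => f a + w ^ n) = (fun w : ℂ => f a + w) ∘ (fun w : ℂ => w ^ n) from rfl,
      Set.image_comp, image_pow_ball hn0 hs0.le, hsn, image_add_ball]
  -- homeomorphism with the unit disk
  have hWhomeo : Nonempty (W ≃ₜ (Metric.ball (0:ℂ) 1)) := by
    set Ψ := Φ.restrOpen W hWopen with hΨ
    have hsrc : Ψ.source = W := by
      rw [Φ.restrOpen_source]
      exact Set.inter_eq_right.mpr hWsrc
    have htgt' : Ψ.target = Φ.target ∩ Φ.symm ⁻¹' W := rfl
    have htgt : Ψ.target = Metric.ball (0:ℂ) s := by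
      rw [htgt']
      apply Set.Subset.antisymm
      · rintro w ⟨hw1, hw2⟩
        have hww : (Φ : ℂ → ℂ) (Φ.symm w) = w := Φ.right_inv hw1
        rw [← hww]
        exact (hw2 : Φ.symm w ∈ W).1.2
      · intro w hw
        obtain ⟨z, hzr, hzw⟩ := hballs hw
        have hzW : z ∈ W :=
          ⟨⟨hball_src hzr, by rw [Set.mem_preimage, hzw]; exact hw⟩, hzr⟩
        refine ⟨hzw ▸ Φ.map_source (hball_src hzr), ?_⟩
        have : Φ.symm w = z := by rw [← hzw, Φ.left_inv (hball_src hzr)]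
        rw [Set.mem_preimage, this]
        exact hzW
    have e1 : W ≃ₜ (Metric.ball (0:ℂ) s) :=
      ((Homeomorph.setCongr hsrc.symm).trans Ψ.toHomeomorphSourceTarget).trans
        (Homeomorph.setCongr htgt)
    have hcs : ((s : ℝ) : ℂ) ≠ 0 := by
      exact_mod_cast hs0.ne'
    have him : (fun w : ℂ => ((s : ℝ) : ℂ) • w) '' Metric.ball (0:ℂ) 1 = Metric.ball (0:ℂ) s := by
      rw [Set.image_smul, _root_.smul_ball hcs, smul_zero, mul_one]
      congr 1
      rw [Complex.norm_real, Real.norm_eq_abs, abs_of_pos hs0]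
    have e2 : (Metric.ball (0:ℂ) 1) ≃ₜ (Metric.ball (0:ℂ) s) :=
      ((Homeomorph.smulOfNeZero ((s : ℝ) : ℂ) hcs).image (Metric.ball 0 1)).trans
        (Homeomorph.setCongr him)
    exact ⟨e1.trans e2.symm⟩
  -- properness
  have hproper : ∀ K ⊆ Metric.ball (f a) ε, IsCompact K → IsCompact (W ∩ f ⁻¹' K) := by
    intro K hK hKc
    rcases K.eq_empty_or_nonempty with rfl | hKne
    · simpa using isCompact_empty
    obtain ⟨k0, hk0K, hk0max⟩ :=
      hKc.exists_isMaxOn hKne ((continuous_id.dist continuous_const).continuousOn)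
    set ε' := dist k0 (f a) with hε'def
    have hε'ε : ε' < ε := by
      have := hK hk0K
      rwa [Metric.mem_ball] at this
    have hε'0 : 0 ≤ ε' := dist_nonneg
    set t := ε' ^ ((n : ℝ)⁻¹) with htdef
    have htn : t ^ n = ε' := Real.rpow_inv_natCast_pow hε'0 hn0.ne'
    have ht0 : 0 ≤ t := Real.rpow_nonneg hε'0 _
    have hts : t < s := by
      apply lt_of_pow_lt_pow_left₀ n hs0.le
      rw [htn, hsn]; exact hε'ε
    set A := Metric.closedBall (0:ℂ) t ∩ (fun w : ℂ => f a + w ^ n) ⁻¹' K with hAdef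
    have hAc : IsCompact A :=
      (isCompact_closedBall _ _).inter_right
        (hKc.isClosed.preimage (continuous_const.add (continuous_pow n)))
    have hAsub : A ⊆ Φ.target := by
      intro w hw
      apply hst
      rw [mem_ball_zero_iff]
      exact lt_of_le_of_lt (mem_closedBall_zero_iff.mp hw.1) hts
    have heq : W ∩ f ⁻¹' K = Φ.symm '' A := by
      apply Set.Subset.antisymm
      · rintro z ⟨hzW, hzK⟩
        refine ⟨(Φ : ℂ → ℂ) z, ⟨?_, ?_⟩, Φ.left_inv (hWsrc hzW)⟩
        · rw [mem_closedBall_zero_iff]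
          apply le_of_pow_le_pow_left₀ hn0.ne' ht0
          rw [← norm_pow, htn, hΦcoe]
          have h1 : f z = f a + φ z ^ n := hWkey z hzW
          have h2 : ‖φ z ^ n‖ = dist (f z) (f a) := by
            rw [h1, dist_eq_norm, add_sub_cancel_left]
          rw [h2]
          exact hk0max hzK
        · rw [Set.mem_preimage, hΦcoe, ← hWkey z hzW]
          exact hzK
      · rintro w ⟨u, huA, rfl⟩
        have hub : u ∈ Metric.ball (0:ℂ) s := by
          rw [mem_ball_zero_iff]
          exact lt_of_le_of_lt (mem_closedBall_zero_iff.mp huA.1) hts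
        obtain ⟨z, hzr, hzu⟩ := hballs hub
        have hzsrc := hball_src hzr
        have hzW : z ∈ W := ⟨⟨hzsrc, by rw [Set.mem_preimage, hzu]; exact hub⟩, hzr⟩
        have hsymm : Φ.symm u = z := by rw [← hzu, Φ.left_inv hzsrc]
        rw [hsymm]
        refine ⟨hzW, ?_⟩
        have hφzu : φ z = u := by rw [← hΦcoe]; exact hzu
        rw [Set.mem_preimage, hWkey z hzW, hφzu]
        exact huA.2
    rw [heq]
    exact hAc.image_of_continuousOn (Φ.continuousOn_symm.mono hAsub)
  exact ⟨W, hWopen, haW, hWsub, hWhomeo, hfW, hproper⟩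

theorem proper_jordan_neighborhoods
    (U : Set ℂ) (hU : IsOpen U) (hconn : IsConnected U)
    (f : ℂ → ℂ) (hf : DifferentiableOn ℂ f U)
    (hnc : ∃ z ∈ U, ∃ w ∈ U, f z ≠ f w)
    (a b : ℂ) (ha : a ∈ U) (hb : b ∈ U) (hab : f a = f b) :
    ∃ ε₀ > 0, ∀ ε : ℝ, 0 < ε → ε < ε₀ →
      ∃ W₁ W₂ : Set ℂ, IsOpen W₁ ∧ IsOpen W₂ ∧
        a ∈ W₁ ∧ b ∈ W₂ ∧ W₁ ⊆ U ∧ W₂ ⊆ U ∧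
        Nonempty (W₁ ≃ₜ (Metric.ball (0:ℂ) 1)) ∧
        Nonempty (W₂ ≃ₜ (Metric.ball (0:ℂ) 1)) ∧
        f '' W₁ = Metric.ball (f a) ε ∧
        f '' W₂ = Metric.ball (f a) ε ∧
        (∀ K ⊆ Metric.ball (f a) ε, IsCompact K → IsCompact (W₁ ∩ f ⁻¹' K)) ∧
        (∀ K ⊆ Metric.ball (f a) ε, IsCompact K → IsCompact (W₂ ∩ f ⁻¹' K)) := by
  obtain ⟨ε₁, hε₁, H₁⟩ := aux_point U hU hconn f hf hnc a ha
  obtain ⟨ε₂, hε₂, H₂⟩ := aux_point U hU hconn f hf hnc b hb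
  refine ⟨min ε₁ ε₂, lt_min hε₁ hε₂, ?_⟩
  intro ε hε0 hεm
  obtain ⟨W₁, h1o, h1a, h1U, h1h, h1i, h1p⟩ := H₁ ε hε0 (lt_of_lt_of_le hεm (min_le_left _ _))
  obtain ⟨W₂, h2o, h2b, h2U, h2h, h2i, h2p⟩ := H₂ ε hε0 (lt_of_lt_of_le hεm (min_le_right _ _))
  rw [← hab] at h2i h2p
  exact ⟨W₁, W₂, h1o, h2o, h1a, h2b, h1U, h2U, h1h, h2h, h1i, h2i, h1p, h2p⟩
end

section
/- Let φ be holomorphic on a neighborhood of the closed unit disk and suppose φ(𝕋) is a Jordan curve (i.e., φ restricted to 𝕋 is injective onto its image, or more generally φ(𝕋) is homeomorphic to a circle). Then φ(𝕋) equals the topological boundary of φ(𝔻). -/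
open Complex Metric Set


/-- A continuous integer-valued function on `Icc 0 1` has equal endpoint values. -/
lemma intval_eq (f : ℝ → ℝ) (hf : ContinuousOn f (Icc 0 1))
    (hint : ∀ t ∈ Icc (0:ℝ) 1, ∃ n : ℤ, f t = n) : f 0 = f 1 := by
  by_contra hne
  obtain ⟨n0, h0⟩ := hint 0 (by norm_num)
  obtain ⟨n1, h1⟩ := hint 1 (by norm_num)
  have hn : n0 ≠ n1 := by rintro rfl; exact hne (h0.trans h1.symm)
  have hmm : (min n0 n1 : ℤ) + 1 ≤ max n0 n1 := Int.add_one_le_iff.mpr (min_lt_max.mpr hn)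
  have hmm' : ((min n0 n1 : ℤ) : ℝ) + 1 ≤ ((max n0 n1 : ℤ) : ℝ) := by exact_mod_cast hmm
  set c : ℝ := ((min n0 n1 : ℤ) : ℝ) + 1/2 with hc
  have hcs : c ∈ uIcc (f 0) (f 1) := by
    rw [h0, h1, Set.mem_uIcc]
    rcases le_total n0 n1 with h | h
    · left
      constructor
      · have : min n0 n1 = n0 := min_eq_left h
        rw [hc, this]; linarith
      · have h1' : max n0 n1 = n1 := max_eq_right h
        rw [hc] at *; rw [h1'] at hmm'; linarith
    · right
      constructor
      · have : min n0 n1 = n1 := min_eq_right h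
        rw [hc, this]; linarith
      · have h1' : max n0 n1 = n0 := max_eq_left h
        rw [hc] at *; rw [h1'] at hmm'; linarith
  have hf' : ContinuousOn f (uIcc 0 1) := by rwa [uIcc_of_le (zero_le_one)]
  obtain ⟨t, ht, hft⟩ := intermediate_value_uIcc hf' hcs
  rw [uIcc_of_le (zero_le_one)] at ht
  obtain ⟨m, hm⟩ := hint t ht
  rw [hm] at hft
  have : ((2*(m - min n0 n1) : ℤ) : ℝ) = 1 := by push_cast; push_cast [hc] at hft; linarith
  have h2 : (2*(m - min n0 n1) : ℤ) = 1 := by exact_mod_cast this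
  omega


lemma mem_slitPlane_of_close (w : ℂ) (h : ‖w - 1‖ < 1) : w ∈ Complex.slitPlane := by
  rw [Complex.mem_slitPlane_iff]
  left
  have h' : ‖1 - w‖ < 1 := by rwa [← norm_neg, neg_sub] at h
  have h2 : (1 - w).re ≤ ‖1 - w‖ := Complex.re_le_norm _
  have h3 : (1 - w).re = 1 - w.re := by simp
  linarith

lemma step_lift (γ1 γ2 : ℝ → ℂ) (h2 : ContinuousOn γ2 (Icc 0 1))
    (hne1 : ∀ t ∈ Icc (0:ℝ) 1, γ1 t ≠ 0)
    (hclose : ∀ t ∈ Icc (0:ℝ) 1, ‖γ2 t - γ1 t‖ < ‖γ1 t‖)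
    (hq01 : γ2 0 / γ1 0 = γ2 1 / γ1 1)
    (hL : ∃ L : ℝ → ℂ, ContinuousOn L (Icc 0 1) ∧
      (∀ t ∈ Icc (0:ℝ) 1, Complex.exp (L t) = γ1 t) ∧ L 1 = L 0) :
    ∃ L : ℝ → ℂ, ContinuousOn L (Icc 0 1) ∧
      (∀ t ∈ Icc (0:ℝ) 1, Complex.exp (L t) = γ2 t) ∧ L 1 = L 0 := by
  obtain ⟨L, hLc, hLe, hLd⟩ := hL
  have h1 : ContinuousOn γ1 (Icc 0 1) := by
    intro t ht
    exact (Complex.continuous_exp.continuousAt.comp_continuousWithinAt (hLc t ht)).congr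
      (fun s hs => (hLe s hs).symm) (hLe t ht).symm
  have habs : ∀ t ∈ Icc (0:ℝ) 1, 0 < ‖γ1 t‖ := fun t ht =>
    norm_pos_iff.mpr (hne1 t ht)
  have hne2 : ∀ t ∈ Icc (0:ℝ) 1, γ2 t ≠ 0 := by
    intro t ht h0
    have := hclose t ht
    rw [h0, zero_sub, norm_neg] at this
    exact lt_irrefl _ this
  have hq : ∀ t ∈ Icc (0:ℝ) 1, ‖γ2 t / γ1 t - 1‖ < 1 := by
    intro t ht
    have hne := hne1 t ht
    have he : γ2 t / γ1 t - 1 = (γ2 t - γ1 t) / γ1 t := by field_simp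
    rw [he, norm_div, div_lt_one (habs t ht)]
    exact hclose t ht
  refine ⟨fun t => L t + Complex.log (γ2 t / γ1 t), ?_, ?_, ?_⟩
  · apply hLc.add
    intro t ht
    have hca : ContinuousAt Complex.log (γ2 t / γ1 t) :=
      continuousAt_clog (mem_slitPlane_of_close _ (hq t ht))
    have hdiv : ContinuousWithinAt (fun s => γ2 s / γ1 s) (Icc 0 1) t :=
      (h2 t ht).div (h1 t ht) (hne1 t ht)
    exact hdiv.clog (mem_slitPlane_of_close _ (hq t ht))
  · intro t ht
    have hqne : γ2 t / γ1 t ≠ 0 := div_ne_zero (hne2 t ht) (hne1 t ht)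
    rw [Complex.exp_add, hLe t ht, Complex.exp_log hqne, mul_comm,
      div_mul_cancel₀ _ (hne1 t ht)]
  · simp only []
    rw [hLd, hq01]


lemma exists_lift_circle (R : ℝ) (a : ℂ) (hR : 0 < R) (ha : ‖a‖ < R) :
    ∃ L : ℝ → ℂ, ContinuousOn L (Icc 0 1) ∧
      (∀ t ∈ Icc (0:ℝ) 1, Complex.exp (L t) = (R:ℂ) * Complex.exp ((t:ℂ) * (2*Real.pi*Complex.I)) - a) ∧
      L 1 - L 0 = 2*Real.pi*Complex.I := by
  set w : ℝ → ℂ := fun t => 1 - (a / R) * Complex.exp (-((t:ℂ) * (2*Real.pi*Complex.I)))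
    with hw
  have hre : ∀ t : ℝ, ((t:ℂ) * (2*Real.pi*Complex.I)).re = 0 := by
    intro t; simp [Complex.mul_re]
  have habs : ∀ t : ℝ, ‖w t - 1‖ < 1 := by
    intro t
    rw [hw]
    simp only [sub_sub_cancel_left]
    rw [norm_neg, norm_mul, norm_div, Complex.norm_exp]
    simp only [Complex.neg_re, hre, neg_zero, Real.exp_zero, mul_one]
    rw [Complex.norm_real, Real.norm_eq_abs, abs_of_pos hR, div_lt_one hR]
    exact ha
  have hslit : ∀ t : ℝ, w t ∈ Complex.slitPlane := fun t => mem_slitPlane_of_close _ (habs t)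
  have hwne : ∀ t : ℝ, w t ≠ 0 := fun t => Complex.slitPlane_ne_zero (hslit t)
  refine ⟨fun t => (Real.log R : ℂ) + (t:ℂ) * (2*Real.pi*Complex.I) + Complex.log (w t),
    ?_, ?_, ?_⟩
  · apply ContinuousOn.add
    · apply continuousOn_const.add
      exact (Complex.continuous_ofReal.mul continuous_const).continuousOn
    · intro t ht
      have hcw : ContinuousWithinAt w (Icc 0 1) t := by
        apply ContinuousWithinAt.sub continuousWithinAt_const
        apply ContinuousWithinAt.mul continuousWithinAt_const
        exact (Complex.continuous_exp.comp
          ((Complex.continuous_ofReal.mul continuous_const).neg)).continuousWithinAt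
      exact hcw.clog (hslit t)
  · intro t ht
    rw [Complex.exp_add, Complex.exp_add, Complex.exp_log (hwne t)]
    have h1 : Complex.exp ((Real.log R : ℂ)) = (R:ℂ) := by
      rw [← Complex.ofReal_exp, Real.exp_log hR]
    rw [h1, hw]
    have hRne : (R:ℂ) ≠ 0 := by
      simp only [ne_eq, Complex.ofReal_eq_zero]; exact ne_of_gt hR
    have h2 : Complex.exp ((t:ℂ) * (2*Real.pi*Complex.I)) *
        Complex.exp (-((t:ℂ) * (2*Real.pi*Complex.I))) = 1 := by
      rw [← Complex.exp_add]; simp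
    have key : (R:ℂ) * Complex.exp ((t:ℂ) * (2*Real.pi*Complex.I)) *
        (a / R * Complex.exp (-((t:ℂ) * (2*Real.pi*Complex.I)))) =
        a * ((R:ℂ)/R) * (Complex.exp ((t:ℂ) * (2*Real.pi*Complex.I)) *
          Complex.exp (-((t:ℂ) * (2*Real.pi*Complex.I)))) := by ring
    rw [mul_sub, mul_one, key, h2, div_self hRne]
    ring
  · have hexpI : Complex.exp (-((1:ℂ) * (2*Real.pi*Complex.I))) = 1 := by
      rw [one_mul, ← Complex.exp_int_mul_two_pi_mul_I (-1)]
      push_cast; ring_nf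
    have hw1 : w 1 = w 0 := by
      rw [hw]; simp only [Complex.ofReal_one, Complex.ofReal_zero, hexpI]
      norm_num
    simp only [Complex.ofReal_one, Complex.ofReal_zero, hw1]
    push_cast
    ring


/-- Two continuous logarithms of the same function on `Icc 0 1` have the same
endpoint increment. -/
lemma lift_diff_eq (L1 L2 : ℝ → ℂ) (h1 : ContinuousOn L1 (Icc 0 1))
    (h2 : ContinuousOn L2 (Icc 0 1))
    (hexp : ∀ t ∈ Icc (0:ℝ) 1, Complex.exp (L1 t) = Complex.exp (L2 t)) :
    L1 1 - L1 0 = L2 1 - L2 0 := by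
  have hd : ∀ t ∈ Icc (0:ℝ) 1, ∃ n : ℤ, L1 t - L2 t = n * (2 * Real.pi * Complex.I) := by
    intro t ht
    have h := hexp t ht
    rw [Complex.exp_eq_exp_iff_exists_int] at h
    obtain ⟨n, hn⟩ := h
    exact ⟨n, by rw [hn]; ring⟩
  have hpi := Real.pi_pos
  set f : ℝ → ℝ := fun t => (L1 t - L2 t).im / (2 * Real.pi) with hf
  have hfc : ContinuousOn f (Icc 0 1) :=
    (Complex.continuous_im.comp_continuousOn (h1.sub h2)).div_const _
  have hfi : ∀ t ∈ Icc (0:ℝ) 1, ∃ n : ℤ, f t = n := by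
    intro t ht
    obtain ⟨n, hn⟩ := hd t ht
    refine ⟨n, ?_⟩
    rw [hf]
    simp only [hn]
    have him : ((n:ℂ) * (2 * Real.pi * Complex.I)).im = n * (2 * Real.pi) := by
      simp [Complex.mul_im]
    rw [him]
    field_simp
  have h01 := intval_eq f hfc hfi
  obtain ⟨m0, hm0⟩ := hd 0 (by norm_num)
  obtain ⟨m1, hm1⟩ := hd 1 (by norm_num)
  have hf0 : f 0 = m0 := by rw [hf]; simp only [hm0]; simp [Complex.mul_im]
  have hf1 : f 1 = m1 := by rw [hf]; simp only [hm1]; simp [Complex.mul_im]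
  have : (m0 : ℝ) = m1 := by rw [← hf0, ← hf1, h01]
  have hmm : m0 = m1 := by exact_mod_cast this
  have : L1 1 - L2 1 = L1 0 - L2 0 := by rw [hm0, hm1, hmm]
  linear_combination this


lemma lift_exists (γ : ℝ → ℂ) (hγ : ContinuousOn γ (Icc 0 1))
    (hne : ∀ t ∈ Icc (0:ℝ) 1, γ t ≠ 0) :
    ∃ L : ℝ → ℂ, ContinuousOn L (Icc 0 1) ∧ ∀ t ∈ Icc (0:ℝ) 1, Complex.exp (L t) = γ t := by
  classical
  obtain ⟨z0, hz0, hz0min⟩ := (isCompact_Icc (a := (0:ℝ)) (b := 1)).exists_isMinOn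
    (nonempty_Icc.mpr zero_le_one) (continuous_norm.comp_continuousOn hγ)
  set m := ‖γ z0‖ with hm
  have hmpos : 0 < m := norm_pos_iff.mpr (hne z0 hz0)
  have hmle : ∀ t, t ∈ Icc (0:ℝ) 1 → m ≤ ‖γ t‖ := fun t ht => hz0min ht
  have huc := (isCompact_Icc (a := (0:ℝ)) (b := 1)).uniformContinuousOn_of_continuous hγ
  rw [Metric.uniformContinuousOn_iff] at huc
  obtain ⟨δ, hδpos, hδ⟩ := huc m hmpos
  have hratio : ∀ s t : ℝ, s ∈ Icc (0:ℝ) 1 → t ∈ Icc (0:ℝ) 1 → dist t s < δ →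
      ‖γ t / γ s - 1‖ < 1 := by
    intro s t hs ht hd
    have hγs := hne s hs
    have he : γ t / γ s - 1 = (γ t - γ s) / γ s := by field_simp
    rw [he, norm_div, div_lt_one (norm_pos_iff.mpr hγs)]
    have := hδ t ht s hs hd
    rw [dist_eq_norm] at this
    exact lt_of_lt_of_le this (hmle s hs)
  have key : ∀ n : ℕ, ∀ b, b ∈ Icc (0:ℝ) 1 → b ≤ n * (δ/2) →
      ∃ L : ℝ → ℂ, ContinuousOn L (Icc 0 b) ∧ ∀ t ∈ Icc (0:ℝ) b, Complex.exp (L t) = γ t := by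
    intro n
    induction n with
    | zero =>
      intro b hb hb0
      have : b = 0 := le_antisymm (by simpa using hb0) hb.1
      subst this
      refine ⟨fun _ => Complex.log (γ 0), continuousOn_const, ?_⟩
      intro t ht
      have : t = 0 := le_antisymm ht.2 ht.1
      subst this
      exact Complex.exp_log (hne 0 (by norm_num))
    | succ n ih =>
      intro b hb hbn
      by_cases hcase : b ≤ n * (δ/2)
      · exact ih b hb hcase
      push_neg at hcase
      set b' : ℝ := min b (n * (δ/2)) with hb'd
      have hb'b : b' ≤ b := min_le_left _ _
      have hb'nn : 0 ≤ b' := le_min hb.1 (by positivity)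
      have hb'mem : b' ∈ Icc (0:ℝ) 1 := ⟨hb'nn, le_trans hb'b hb.2⟩
      have hgap : b - b' ≤ δ/2 := by
        rcases min_cases b (n * (δ/2)) with ⟨h1, _⟩ | ⟨h1, _⟩
        · rw [hb'd, h1]; linarith
        · rw [hb'd, h1]; push_cast at hbn; linarith
      obtain ⟨L, hLc, hLe⟩ := ih b' hb'mem (min_le_right _ _)
      have hγb' := hne b' hb'mem
      have hmemIcc : ∀ t, t ∈ Icc b' b → t ∈ Icc (0:ℝ) 1 :=
        fun t ht => ⟨le_trans hb'nn ht.1, le_trans ht.2 hb.2⟩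
      have hclose : ∀ t, t ∈ Icc b' b → ‖γ t / γ b' - 1‖ < 1 := by
        intro t ht
        apply hratio b' t hb'mem (hmemIcc t ht)
        rw [Real.dist_eq, _root_.abs_of_nonneg (by linarith [ht.1])]
        linarith [ht.2, hgap, hδpos]
      refine ⟨(Iic b').piecewise L (fun t => L b' + Complex.log (γ t / γ b')), ?_, ?_⟩
      · apply ContinuousOn.piecewise
        · intro x hx
          have : x = b' := by
            have := hx.2
            rwa [frontier_Iic, mem_singleton_iff] at this
          subst this
          rw [div_self hγb', Complex.log_one, add_zero]
        · rw [closure_Iic]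
          exact hLc.mono (fun x hx => ⟨hx.1.1, hx.2⟩)
        · have hcIoi : closure (Iic b')ᶜ = Ici b' := by rw [compl_Iic, closure_Ioi]
          rw [hcIoi]
          intro t ht
          have hsub : Icc 0 b ∩ Ici b' ⊆ Icc (0:ℝ) 1 :=
            fun x hx => ⟨hx.1.1, le_trans hx.1.2 hb.2⟩
          apply ContinuousWithinAt.add continuousWithinAt_const
          exact ((((hγ.mono hsub) t ht).div continuousWithinAt_const hγb').clog
            (mem_slitPlane_of_close _ (hclose t ⟨ht.2, ht.1.2⟩)))
      · intro t ht
        by_cases hts : t ≤ b'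
        · rw [Set.piecewise_eq_of_mem _ _ _ (mem_Iic.mpr hts)]
          exact hLe t ⟨ht.1, hts⟩
        · rw [Set.piecewise_eq_of_notMem _ _ _ (by simpa using hts)]
          push_neg at hts
          have htmem : t ∈ Icc b' b := ⟨hts.le, ht.2⟩
          rw [Complex.exp_add, hLe b' ⟨hb'nn, le_rfl⟩,
            Complex.exp_log (div_ne_zero (hne t (hmemIcc t htmem)) hγb'),
            mul_comm, div_mul_cancel₀ _ hγb']
  obtain ⟨n, hn⟩ := exists_nat_ge (1 / (δ/2))
  have h1n : 1 ≤ n * (δ/2) := by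
    rw [div_le_iff₀ (by positivity)] at hn
    linarith
  exact key n 1 ⟨zero_le_one, le_rfl⟩ h1n


/-- Borsuk-type lemma: if `z - a` has a continuous logarithm on the compact set `K`
and `a ∉ K`, then the connected component of `a` in `Kᶜ` is unbounded. -/
lemma borsuk (K : Set ℂ) (hK : IsCompact K) (a : ℂ) (ha : a ∉ K)
    (g : ℂ → ℂ) (hg : ContinuousOn g K) (hge : ∀ z ∈ K, Complex.exp (g z) = z - a) :
    ¬ Bornology.IsBounded (connectedComponentIn Kᶜ a) := by
  intro hBdd
  classical
  set B := connectedComponentIn Kᶜ a with hB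
  have haB : a ∈ B := mem_connectedComponentIn (by simpa using ha)
  have hBo : IsOpen B := hK.isClosed.isOpen_compl.connectedComponentIn
  have hfr : frontier B ⊆ K := by
    intro x hx
    rw [hBo.frontier_eq] at hx
    by_contra hxK
    have hop : IsOpen (connectedComponentIn Kᶜ x) := hK.isClosed.isOpen_compl.connectedComponentIn
    have hxmem : x ∈ connectedComponentIn Kᶜ x := mem_connectedComponentIn (by simpa using hxK)
    obtain ⟨y, hy1, hy2⟩ := mem_closure_iff.mp hx.1 _ hop hxmem
    have e1 : connectedComponentIn Kᶜ x = connectedComponentIn Kᶜ y := connectedComponentIn_eq hy1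
    have e2 : B = connectedComponentIn Kᶜ y := connectedComponentIn_eq hy2
    exact hx.2 (by rw [show B = connectedComponentIn Kᶜ x from e2.trans e1.symm]; exact hxmem)
  obtain ⟨G, hG⟩ := ContinuousMap.exists_restrict_eq (Y := ℂ) hK.isClosed ⟨K.restrict g, hg.restrict⟩
  have hGK : ∀ z, z ∈ K → G z = g z := by
    intro z hz
    have := ContinuousMap.congr_fun hG ⟨z, hz⟩
    exact this
  set Φ : ℂ → ℂ := B.piecewise (fun z => Complex.exp (G z)) (fun z => z - a) with hΦ
  have hΦc : Continuous Φ := by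
    rw [← continuousOn_univ]
    apply ContinuousOn.piecewise
    · intro x hx
      have hxK : x ∈ K := hfr hx.2
      rw [hGK x hxK, hge x hxK]
    · exact (Complex.continuous_exp.comp G.continuous).continuousOn
    · exact (continuous_id.sub continuous_const).continuousOn
  have hΦne : ∀ z, Φ z ≠ 0 := by
    intro z
    by_cases hz : z ∈ B
    · rw [hΦ, Set.piecewise_eq_of_mem _ _ _ hz]; exact Complex.exp_ne_zero _
    · rw [hΦ, Set.piecewise_eq_of_notMem _ _ _ hz]
      intro h0
      rw [sub_eq_zero] at h0
      exact hz (h0 ▸ haB)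
  obtain ⟨R0, hR0⟩ := hBdd.subset_closedBall 0
  set R : ℝ := max (R0 + 1) (‖a‖ + 1) with hRdef
  have hRpos : 0 < R := lt_of_lt_of_le (by positivity) (le_max_right _ _)
  have haR : ‖a‖ < R := lt_of_lt_of_le (lt_add_one _) (le_max_right _ _)
  have hout : ∀ z : ℂ, R ≤ ‖z‖ → z ∉ B := by
    intro z hz hzB
    have h1 := hR0 hzB
    rw [mem_closedBall, Complex.dist_eq, sub_zero] at h1
    have h2 : R0 + 1 ≤ R := le_max_left _ _
    linarith
  have hcb : IsCompact (closedBall (0:ℂ) R) := isCompact_closedBall _ _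
  obtain ⟨z0, hz0, hz0min⟩ := hcb.exists_isMinOn (nonempty_closedBall.mpr hRpos.le)
    ((continuous_norm.comp hΦc).continuousOn)
  set m := ‖Φ z0‖ with hm
  have hmpos : 0 < m := norm_pos_iff.mpr (hΦne z0)
  have huc := hcb.uniformContinuousOn_of_continuous hΦc.continuousOn
  rw [Metric.uniformContinuousOn_iff] at huc
  obtain ⟨δ, hδpos, hδ⟩ := huc m hmpos
  set γ : ℝ → ℝ → ℂ := fun r t => Φ ((r:ℂ) * Complex.exp ((t:ℂ) * (2*Real.pi*Complex.I)))
    with hγ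
  have habs_e : ∀ t : ℝ, ‖Complex.exp ((t:ℂ) * (2*Real.pi*Complex.I))‖ = 1 := by
    intro t
    rw [Complex.norm_exp]
    have : ((t:ℂ) * (2*Real.pi*Complex.I)).re = 0 := by simp [Complex.mul_re]
    rw [this, Real.exp_zero]
  have hcirc : ∀ r : ℝ, r ∈ Icc (0:ℝ) R → ∀ t : ℝ,
      ((r:ℂ) * Complex.exp ((t:ℂ) * (2*Real.pi*Complex.I))) ∈ closedBall (0:ℂ) R := by
    intro r hr t
    rw [mem_closedBall, Complex.dist_eq, sub_zero, norm_mul, habs_e, mul_one,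
      Complex.norm_real, Real.norm_eq_abs, _root_.abs_of_nonneg hr.1]
    exact hr.2
  have hγc : ∀ r : ℝ, ContinuousOn (γ r) (Icc 0 1) := by
    intro r
    apply Continuous.continuousOn
    exact hΦc.comp (continuous_const.mul (Complex.continuous_exp.comp
      (Complex.continuous_ofReal.mul continuous_const)))
  have hγne : ∀ r t : ℝ, γ r t ≠ 0 := fun r t => hΦne _
  have hγloop : ∀ r : ℝ, γ r 1 = γ r 0 := by
    intro r
    rw [hγ]
    dsimp only
    congr 1
    rw [Complex.ofReal_one, Complex.ofReal_zero, one_mul, zero_mul, Complex.exp_zero,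
      ← Complex.exp_int_mul_two_pi_mul_I 1]
    push_cast
    ring_nf
  have key : ∀ n : ℕ, ∀ r, r ∈ Icc (0:ℝ) R → r ≤ n * (δ/2) →
      ∃ L : ℝ → ℂ, ContinuousOn L (Icc 0 1) ∧
        (∀ t ∈ Icc (0:ℝ) 1, Complex.exp (L t) = γ r t) ∧ L 1 = L 0 := by
    intro n
    induction n with
    | zero =>
      intro r hr hr0
      have hr00 : r = 0 := le_antisymm (by simpa using hr0) hr.1
      subst hr00
      refine ⟨fun _ => Complex.log (Φ 0), continuousOn_const, ?_, rfl⟩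
      intro t ht
      rw [Complex.exp_log (hΦne 0), hγ]
      dsimp only
      rw [Complex.ofReal_zero, zero_mul]
    | succ n ih =>
      intro r hr hrn
      by_cases hcase : r ≤ n * (δ/2)
      · exact ih r hr hcase
      push_neg at hcase
      set r' : ℝ := n * (δ/2) with hr'd
      have hr'mem : r' ∈ Icc (0:ℝ) R := ⟨by positivity, le_trans hcase.le hr.2⟩
      have hstep : r - r' < δ := by push_cast at hrn; simp only [hr'd]; linarith
      apply step_lift (γ r') (γ r) (hγc r) (fun t _ => hγne r' t) ?_ ?_ (ih r' hr'mem le_rfl)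
      · intro t ht
        have hdist : dist ((r:ℂ) * Complex.exp ((t:ℂ) * (2*Real.pi*Complex.I)))
            ((r':ℂ) * Complex.exp ((t:ℂ) * (2*Real.pi*Complex.I))) < δ := by
          rw [Complex.dist_eq, ← sub_mul, norm_mul, habs_e, mul_one, ← Complex.ofReal_sub,
            Complex.norm_real, Real.norm_eq_abs, _root_.abs_of_nonneg (by linarith [hcase] : (0:ℝ) ≤ r - r')]
          exact hstep
        have hlt := hδ _ (hcirc r hr t) _ (hcirc r' hr'mem t) hdist
        rw [dist_eq_norm] at hlt
        have hmle : m ≤ ‖γ r' t‖ := hz0min (hcirc r' hr'mem t)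
        calc ‖γ r t - γ r' t‖ = ‖Φ _ - Φ _‖ := rfl
          _ < m := hlt
          _ ≤ ‖γ r' t‖ := hmle
      · rw [hγloop r, hγloop r']
  obtain ⟨n, hn⟩ := exists_nat_ge (R / (δ/2))
  have hRn : R ≤ n * (δ/2) := by
    rw [div_le_iff₀ (by positivity)] at hn
    linarith
  obtain ⟨L, hLc, hLe, hLd⟩ := key n R ⟨hRpos.le, le_rfl⟩ hRn
  obtain ⟨L', hL'c, hL'e, hL'd⟩ := exists_lift_circle R a hRpos haR
  have hγR : ∀ t ∈ Icc (0:ℝ) 1, γ R t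
      = (R:ℂ) * Complex.exp ((t:ℂ)*(2*Real.pi*Complex.I)) - a := by
    intro t ht
    rw [hγ]
    dsimp only
    rw [hΦ, Set.piecewise_eq_of_notMem]
    apply hout
    rw [norm_mul, habs_e, mul_one, Complex.norm_real, Real.norm_eq_abs, _root_.abs_of_pos hRpos]
  have hdd := lift_diff_eq L L' hLc hL'c (by
    intro t ht
    rw [hLe t ht, hL'e t ht, hγR t ht])
  rw [hL'd] at hdd
  rw [sub_eq_zero.mpr hLd] at hdd
  have : (2*Real.pi : ℝ) = 0 := by
    have := congrArg Complex.im hdd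
    simpa using this.symm
  have := Real.pi_ne_zero
  linarith [Real.pi_pos]


lemma no_inj_circle (p : ℂ) (r : ℝ) (hr : 0 < r) (F : ℂ → ℝ)
    (hFc : ContinuousOn F (sphere p r)) (hFi : Set.InjOn F (sphere p r)) : False := by
  have hπ := Real.pi_pos
  set g : ℝ → ℂ := fun θ => p + r * Complex.exp ((θ:ℂ) * Complex.I) with hg
  have habse : ∀ θ : ℝ, ‖Complex.exp ((θ:ℂ) * Complex.I)‖ = 1 := by
    intro θ
    rw [Complex.norm_exp]
    have : ((θ:ℂ) * Complex.I).re = 0 := by simp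
    rw [this, Real.exp_zero]
  have hgs : ∀ θ : ℝ, g θ ∈ sphere p r := by
    intro θ
    rw [mem_sphere, Complex.dist_eq]
    simp only [hg, add_sub_cancel_left]
    rw [norm_mul, habse, mul_one, Complex.norm_real, Real.norm_eq_abs, _root_.abs_of_pos hr]
  have hgcont : Continuous g := by
    apply continuous_const.add
    exact continuous_const.mul (Complex.continuous_exp.comp
      (Complex.continuous_ofReal.mul continuous_const))
  have hrne : (r:ℂ) ≠ 0 := by
    simp only [ne_eq, Complex.ofReal_eq_zero]; exact ne_of_gt hr
  have hginj : ∀ θ1 θ2 : ℝ, g θ1 = g θ2 → ∃ k : ℤ, θ1 = θ2 + 2 * Real.pi * k := by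
    intro θ1 θ2 h
    simp only [hg, add_right_inj] at h
    have h2 : Complex.exp ((θ1:ℂ) * Complex.I) = Complex.exp ((θ2:ℂ) * Complex.I) :=
      mul_left_cancel₀ hrne h
    rw [Complex.exp_eq_exp_iff_exists_int] at h2
    obtain ⟨k, hk⟩ := h2
    refine ⟨k, ?_⟩
    have := congrArg Complex.im hk
    simp at this
    linarith
  have hper : ∀ θ : ℝ, g (θ + 2 * Real.pi) = g θ := by
    intro θ
    simp only [hg, add_right_inj]
    congr 1
    push_cast
    rw [add_mul, Complex.exp_add]
    have h1 : ((2:ℂ) * Real.pi * Complex.I) = 2 * ↑Real.pi * Complex.I := by push_cast; ring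
    rw [h1, Complex.exp_two_pi_mul_I, mul_one]
  set f : ℝ → ℝ := fun θ => F (g θ) with hf
  have hfc : Continuous f := hFc.comp_continuous hgcont hgs
  have hfper : ∀ θ : ℝ, f (θ + 2 * Real.pi) = f θ := fun θ => by rw [hf]; simp [hper θ]
  obtain ⟨θM, hθM, hmax⟩ := isCompact_Icc.exists_isMaxOn
    (nonempty_Icc.mpr (by linarith : (0:ℝ) ≤ 2 * Real.pi)) hfc.continuousOn
  have hglob : ∀ θ, θ ∈ Icc (θM - Real.pi) (θM + Real.pi) → f θ ≤ f θM := by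
    intro θ hθ
    by_cases hcase : θ ∈ Icc (0:ℝ) (2 * Real.pi)
    · exact hmax hcase
    rw [mem_Icc] at hcase
    push_neg at hcase
    rcases lt_or_ge θ 0 with hneg | hpos
    · have : f θ = f (θ + 2 * Real.pi) := (hfper θ).symm
      rw [this]
      apply hmax
      constructor
      · have : θM - Real.pi ≥ -Real.pi := by linarith [hθM.1]
        linarith [hθ.1]
      · linarith
    · have h2π : 2 * Real.pi < θ := hcase hpos
      have : f θ = f (θ - 2 * Real.pi) := by
        rw [← hfper (θ - 2 * Real.pi)]; ring_nf
      rw [this]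
      apply hmax
      constructor
      · linarith
      · have : θ ≤ θM + Real.pi := hθ.2
        have : θM ≤ 2 * Real.pi := hθM.2
        linarith [hθ.2]
  set c0 : ℝ := f (θM - Real.pi) with hc0
  have hgpm : g (θM + Real.pi) = g (θM - Real.pi) := by
    have := hper (θM - Real.pi)
    convert this using 2
    ring
  have hfpm : f (θM + Real.pi) = c0 := by rw [hf]; simp only [hgpm]; rfl
  have hc0lt : c0 < f θM := by
    have hle : c0 ≤ f θM := hglob _ ⟨by linarith, by linarith⟩
    refine lt_of_le_of_ne hle (fun heq => ?_)
    have hgeq : g (θM - Real.pi) = g θM := hFi (hgs _) (hgs _) heq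
    obtain ⟨k, hk⟩ := hginj _ _ hgeq
    have : ((2*k+1 : ℤ) : ℝ) = 0 := by
      push_cast
      have : Real.pi * (2 * (k:ℝ) + 1) = 0 := by linarith [hk]
      rcases mul_eq_zero.mp this with h | h
      · linarith
      · linarith [h]
    have h0 : (2*k+1 : ℤ) = 0 := by exact_mod_cast this
    omega
  set c : ℝ := (c0 + f θM) / 2 with hcdef
  have hc1 : c0 < c := by rw [hcdef]; linarith
  have hc2 : c < f θM := by rw [hcdef]; linarith
  obtain ⟨t1, ht1, hft1⟩ := intermediate_value_Icc (by linarith : θM - Real.pi ≤ θM)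
    hfc.continuousOn (by rw [← hc0]; exact ⟨hc1.le, hc2.le⟩)
  obtain ⟨t2, ht2, hft2⟩ := intermediate_value_Icc' (by linarith : θM ≤ θM + Real.pi)
    hfc.continuousOn (by rw [hfpm]; exact ⟨hc1.le, hc2.le⟩)
  have ht1M : t1 ≠ θM := fun h => by rw [h] at hft1; linarith
  have ht2M : t2 ≠ θM := fun h => by rw [h] at hft2; linarith
  have ht1lt : t1 < θM := lt_of_le_of_ne ht1.2 ht1M
  have ht2gt : θM < t2 := lt_of_le_of_ne ht2.1 (Ne.symm ht2M)
  have hgeq : g t1 = g t2 := hFi (hgs _) (hgs _) (hft1.trans hft2.symm)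
  obtain ⟨k, hk⟩ := hginj _ _ hgeq
  rcases eq_or_lt_of_le (show t2 - t1 ≤ 2 * Real.pi from by linarith [ht1.1, ht2.2]) with heq | hlt
  · have ht1e : t1 = θM - Real.pi := by linarith [ht1.1, ht2.2]
    rw [ht1e, ← hc0] at hft1
    linarith
  · have hk1 : 2 * Real.pi * (k:ℝ) = t1 - t2 := by linarith [hk]
    have hkneg : (k:ℝ) < 0 := by nlinarith
    have hkgt : -1 < (k:ℝ) := by nlinarith
    have hkneg' : k < 0 := by exact_mod_cast hkneg
    have hk1' : k ≤ -1 := by omega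
    have : (k:ℝ) ≤ -1 := by exact_mod_cast hk1'
    linarith


lemma jordan_empty_interior (C : Set ℂ)
    (e : (Metric.sphere (0:ℂ) 1) ≃ₜ C) : interior C = ∅ := by
  classical
  by_contra hne
  obtain ⟨p, hp⟩ := Set.nonempty_iff_ne_empty.mpr hne
  obtain ⟨ε, hε, hball⟩ := Metric.isOpen_iff.mp isOpen_interior p hp
  have hballC : ball p ε ⊆ C := hball.trans interior_subset
  set r := ε/2 with hrdef
  have hr : 0 < r := by positivity
  have hsub : sphere p r ⊆ C := fun z hz => hballC (by
    rw [mem_ball]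
    rw [mem_sphere] at hz
    rw [hz]; rw [hrdef]; linarith)
  have hps : ∃ s0 : (Metric.sphere (0:ℂ) 1), (e s0 : ℂ) ∉ sphere p r := by
    by_contra h
    push_neg at h
    have hCs : C ⊆ sphere p r := by
      intro c hc
      have hc2 : c = ((e (e.symm ⟨c, hc⟩)) : ℂ) := by rw [e.apply_symm_apply]
      rw [hc2]; exact h _
    have hpC : p ∈ C := interior_subset hp
    have := hCs hpC
    rw [mem_sphere] at this
    simp at this
    rw [← this] at hr
    exact lt_irrefl _ hr
  obtain ⟨s0, hs0⟩ := hps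
  set s : ℂ := (s0 : ℂ) with hsdef
  have hs1 : ‖s‖ = 1 := by
    have := s0.2
    rwa [mem_sphere, Complex.dist_eq, sub_zero] at this
  have hsne : s ≠ 0 := by intro h; rw [h] at hs1; simp at hs1
  set F : ℂ → ℝ := fun z =>
    if h : z ∈ C then Complex.arg (-(((e.symm ⟨z, h⟩) : ℂ)) / s) else 0 with hF
  have hu1 : ∀ z (hz : z ∈ C), ‖(e.symm ⟨z, hz⟩ : ℂ)‖ = 1 := fun z hz => by
    have := (e.symm ⟨z, hz⟩).2
    rwa [mem_sphere, Complex.dist_eq, sub_zero] at this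
  have hune : ∀ z (hz : z ∈ sphere p r), ((e.symm ⟨z, hsub hz⟩ : ℂ)) ≠ s := by
    intro z hz h
    have h1 : e.symm ⟨z, hsub hz⟩ = s0 := Subtype.ext h
    have h2 : (⟨z, hsub hz⟩ : C) = e s0 := by rw [← h1, e.apply_symm_apply]
    have h3 : z = (e s0 : ℂ) := congrArg Subtype.val h2
    exact hs0 (h3 ▸ hz)
  have hvabs : ∀ z (hz : z ∈ C), ‖-(((e.symm ⟨z, hz⟩) : ℂ)) / s‖ = 1 := by
    intro z hz
    rw [norm_div, norm_neg, hu1 z hz, hs1, div_one]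
  have hvslit : ∀ z (hz : z ∈ sphere p r),
      (-(((e.symm ⟨z, hsub hz⟩) : ℂ)) / s) ∈ Complex.slitPlane := by
    intro z hz
    set v := -(((e.symm ⟨z, hsub hz⟩) : ℂ)) / s with hv
    rw [Complex.mem_slitPlane_iff]
    by_contra hcon
    push_neg at hcon
    obtain ⟨hre, him⟩ := hcon
    have habs1 : ‖v‖ = 1 := hvabs z (hsub hz)
    have hveq : v = (v.re : ℂ) := Complex.ext rfl (by simpa using him)
    rw [hveq, Complex.norm_real, Real.norm_eq_abs] at habs1
    have hvre : v.re = -1 := by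
      rcases abs_eq (by norm_num : (0:ℝ) ≤ 1) |>.mp habs1 with h | h
      · linarith
      · exact h
    have hvm1 : v = -1 := by rw [hveq, hvre]; norm_num
    rw [hv] at hvm1
    rw [div_eq_iff hsne] at hvm1
    have : ((e.symm ⟨z, hsub hz⟩) : ℂ) = s := by
      have := congrArg Neg.neg hvm1
      simpa using this
    exact hune z hz this
  have hFc : ContinuousOn F (sphere p r) := by
    rw [continuousOn_iff_continuous_restrict]
    have heq : (sphere p r).domRestrict F = fun z : sphere p r =>
        Complex.arg (-(((e.symm ⟨z.1, hsub z.2⟩) : ℂ)) / s) := by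
      funext z
      simp only [Set.domRestrict_apply, hF]
      rw [dif_pos (hsub z.2)]
    rw [heq]
    rw [continuous_iff_continuousAt]
    intro z
    have hm1 : Continuous (fun z : sphere p r => -(((e.symm ⟨z.1, hsub z.2⟩) : ℂ)) / s) := by
      apply Continuous.div_const
      apply Continuous.neg
      exact continuous_subtype_val.comp (e.symm.continuous.comp
        (Continuous.subtype_mk continuous_subtype_val _))
    exact ContinuousAt.comp (g := Complex.arg) (Complex.continuousAt_arg (hvslit z.1 z.2))
      hm1.continuousAt
  have hFi : Set.InjOn F (sphere p r) := by
    intro z1 hz1 z2 hz2 hFeq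
    simp only [hF] at hFeq
    rw [dif_pos (hsub hz1), dif_pos (hsub hz2)] at hFeq
    have hveq : -(((e.symm ⟨z1, hsub hz1⟩) : ℂ)) / s = -(((e.symm ⟨z2, hsub hz2⟩) : ℂ)) / s :=
      Complex.ext_norm_arg ((hvabs z1 (hsub hz1)).trans (hvabs z2 (hsub hz2)).symm) hFeq
    have hueq : ((e.symm ⟨z1, hsub hz1⟩) : ℂ) = ((e.symm ⟨z2, hsub hz2⟩) : ℂ) := by
      rw [div_left_inj' hsne, neg_inj] at hveq
      exact hveq
    have := congrArg e (Subtype.ext hueq : e.symm ⟨z1, hsub hz1⟩ = e.symm ⟨z2, hsub hz2⟩)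
    rw [e.apply_symm_apply, e.apply_symm_apply] at this
    exact congrArg Subtype.val this
  exact no_inj_circle p r hr F hFc hFi


/-- `|e^{ia} - e^{ib}| ≤ 2|a-b|` for `|a-b| ≤ 1`. -/
lemma exp_circle_close (a b : ℝ) (h : |a - b| ≤ 1) :
    ‖Complex.exp ((a:ℂ) * Complex.I) - Complex.exp ((b:ℂ) * Complex.I)‖
      ≤ 2 * |a - b| := by
  have h1 : Complex.exp ((a:ℂ) * Complex.I) - Complex.exp ((b:ℂ) * Complex.I)
      = Complex.exp ((b:ℂ) * Complex.I) * (Complex.exp (((a - b : ℝ):ℂ) * Complex.I) - 1) := by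
    rw [mul_sub, mul_one, ← Complex.exp_add]
    push_cast
    ring_nf
  rw [h1, norm_mul]
  have habse : ‖Complex.exp ((b:ℂ) * Complex.I)‖ = 1 := by
    rw [Complex.norm_exp]; simp
  rw [habse, one_mul]
  have habs2 : ‖((a - b : ℝ):ℂ) * Complex.I‖ = |a - b| := by
    rw [norm_mul, Complex.norm_I, mul_one, Complex.norm_real, Real.norm_eq_abs]
  calc ‖Complex.exp (((a - b : ℝ):ℂ) * Complex.I) - 1‖
      ≤ 2 * ‖((a - b : ℝ):ℂ) * Complex.I‖ :=
        Complex.norm_exp_sub_one_le (by rw [habs2]; exact h)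
    _ = 2 * |a - b| := by rw [habs2]

/-- exp of a real multiple of `I` lies on the unit circle -/
lemma exp_mem_sphere (θ : ℝ) : Complex.exp ((θ:ℂ) * Complex.I) ∈ Metric.sphere (0:ℂ) 1 := by
  rw [mem_sphere, Complex.dist_eq, sub_zero, Complex.norm_exp]
  simp

lemma exp_inj_aux (θ1 θ2 : ℝ)
    (h : Complex.exp ((θ1:ℂ) * Complex.I) = Complex.exp ((θ2:ℂ) * Complex.I)) :
    ∃ k : ℤ, θ1 = θ2 + 2 * Real.pi * k := by
  rw [Complex.exp_eq_exp_iff_exists_int] at h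
  obtain ⟨k, hk⟩ := h
  refine ⟨k, ?_⟩
  have := congrArg Complex.im hk
  simp at this
  linarith

lemma arc_containing (C F : Set ℂ) (e : (Metric.sphere (0:ℂ) 1) ≃ₜ C)
    (hFC : F ⊆ C) (hFcl : IsClosed F) (p : ℂ) (hpC : p ∈ C) (hpF : p ∉ F) :
    ∃ γ : ℝ → ℂ, ContinuousOn γ (Icc 0 1) ∧ Set.InjOn γ (Icc 0 1) ∧
      F ⊆ γ '' (Icc 0 1) ∧ γ '' (Icc 0 1) ⊆ C := by
  have hπ := Real.pi_gt_three
  set q := e.symm ⟨p, hpC⟩ with hq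
  set qc : ℂ := (q : ℂ) with hqc
  have hq1 : ‖qc‖ = 1 := by
    have := q.2
    rwa [mem_sphere, Complex.dist_eq, sub_zero] at this
  set θ0 := Complex.arg qc with hθ0
  have hqcexp : qc = Complex.exp ((θ0:ℂ) * Complex.I) := by
    conv_lhs => rw [← Complex.norm_mul_exp_arg_mul_I qc]
    rw [hq1, ← hθ0]
    simp
  set Fs : Set ℂ := Subtype.val '' (e.symm '' (Subtype.val ⁻¹' F : Set C)) with hFs
  have hFscl : IsCompact Fs := by
    have h1 : IsClosed (Subtype.val ⁻¹' F : Set C) := hFcl.preimage continuous_subtype_val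
    have h2 : IsClosed (e.symm '' (Subtype.val ⁻¹' F : Set C)) := e.symm.isClosedMap _ h1
    exact h2.isCompact.image continuous_subtype_val
  have hFssph : Fs ⊆ Metric.sphere (0:ℂ) 1 := by
    rintro u ⟨v, hv, rfl⟩
    exact v.2
  have hqcFs : qc ∉ Fs := by
    rintro ⟨v, ⟨x, hx, hxv⟩, hv⟩
    have h1 : v = q := Subtype.ext hv
    rw [h1] at hxv
    have h2 : x = e q := by rw [← hxv, e.apply_symm_apply]
    have h3 : (x : ℂ) = p := by rw [h2, hq, e.apply_symm_apply]
    have hx' : (x:ℂ) ∈ F := hx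
    rw [h3] at hx'
    exact hpF hx'
  obtain ⟨d, hdpos, hdle⟩ : ∃ d : ℝ, 0 < d ∧ ∀ u ∈ Fs, d ≤ dist qc u := by
    rcases Fs.eq_empty_or_nonempty with hFse | hFse
    · exact ⟨1, one_pos, by rw [hFse]; simp⟩
    · refine ⟨infDist qc Fs, (hFscl.isClosed.notMem_iff_infDist_pos hFse).mp hqcFs, ?_⟩
      exact fun u hu => infDist_le_dist_of_mem hu
  set δ : ℝ := min (d/4) 1 with hδd
  have hδpos : 0 < δ := lt_min (by linarith) one_pos
  have hδ1 : δ ≤ 1 := min_le_right _ _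
  have hδd2 : 2 * δ ≤ d / 2 := by
    have := min_le_left (d/4) 1
    simp only [← hδd] at this
    linarith
  have hslope : 0 < 2 * Real.pi - 2 * δ := by linarith
  set θf : ℝ → ℝ := fun t => θ0 + δ + t * (2 * Real.pi - 2 * δ) with hθf
  set γS : ℝ → ℂ := fun t => Complex.exp (((θf t : ℝ):ℂ) * Complex.I) with hγS
  set γ : ℝ → ℂ := fun t => ((e ⟨γS t, exp_mem_sphere _⟩ : C) : ℂ) with hγ
  have hγcont : Continuous γ := by
    apply continuous_subtype_val.comp
    apply e.continuous.comp
    apply Continuous.subtype_mk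
    exact Complex.continuous_exp.comp
      ((Complex.continuous_ofReal.comp (by fun_prop)).mul continuous_const)
  have hθfinj : ∀ t1 t2 : ℝ, t1 ∈ Icc (0:ℝ) 1 → t2 ∈ Icc (0:ℝ) 1 →
      γS t1 = γS t2 → t1 = t2 := by
    intro t1 t2 ht1 ht2 h
    obtain ⟨k, hk⟩ := exp_inj_aux _ _ h
    have hd1 : θf t1 - θf t2 = (t1 - t2) * (2 * Real.pi - 2 * δ) := by rw [hθf]; ring
    have hb : |t1 - t2| ≤ 1 := by
      rw [abs_le]; constructor <;> [linarith [ht1.1, ht2.2]; linarith [ht1.2, ht2.1]]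
    have hkr : 2 * Real.pi * (k:ℝ) = (t1 - t2) * (2 * Real.pi - 2 * δ) := by
      rw [← hd1, hk]; ring
    have hk0 : k = 0 := by
      by_contra hkne
      have h1 : 1 ≤ |(k:ℝ)| := by
        have : 1 ≤ |k| := Int.one_le_abs hkne
        calc (1:ℝ) ≤ (|k| : ℤ) := by exact_mod_cast this
          _ = |(k:ℝ)| := by push_cast; rfl
      have h2 : |2 * Real.pi * (k:ℝ)| = 2 * Real.pi * |(k:ℝ)| := by
        rw [abs_mul, abs_of_pos Real.two_pi_pos]
      have h3 : |(t1 - t2) * (2 * Real.pi - 2 * δ)| ≤ 2 * Real.pi - 2 * δ := by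
        rw [abs_mul, abs_of_pos hslope]
        nlinarith
      rw [hkr] at h2
      nlinarith
    rw [hk0] at hk
    simp at hk
    have : (t1 - t2) * (2 * Real.pi - 2 * δ) = 0 := by rw [← hd1, hk]; ring
    rcases mul_eq_zero.mp this with h | h
    · linarith
    · linarith
  have hγinj : Set.InjOn γ (Icc 0 1) := by
    intro t1 ht1 t2 ht2 h
    apply hθfinj t1 t2 ht1 ht2
    have h1 : (e ⟨γS t1, exp_mem_sphere _⟩ : C) = (e ⟨γS t2, exp_mem_sphere _⟩ : C) :=
      Subtype.ext h
    have h2 := e.injective h1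
    exact congrArg Subtype.val h2
  refine ⟨γ, hγcont.continuousOn, hγinj, ?_, ?_⟩
  · -- F ⊆ image
    intro x hx
    have hxC : x ∈ C := hFC hx
    set us := e.symm ⟨x, hxC⟩ with hus
    set u : ℂ := (us : ℂ) with hu
    have hu1 : ‖u‖ = 1 := by
      have := us.2
      rwa [mem_sphere, Complex.dist_eq, sub_zero] at this
    have huFs : u ∈ Fs := ⟨us, ⟨⟨x, hxC⟩, hx, rfl⟩, rfl⟩
    have hud : d ≤ dist qc u := hdle u huFs
    set θu := toIocMod Real.two_pi_pos θ0 (Complex.arg u) with hθu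
    have hθumem : θu ∈ Ioc θ0 (θ0 + 2 * Real.pi) := toIocMod_mem_Ioc _ _ _
    have huexp : Complex.exp (((θu : ℝ):ℂ) * Complex.I) = u := by
      have hdiv := toIocMod_add_toIocDiv_zsmul Real.two_pi_pos θ0 (Complex.arg u)
      set k := toIocDiv Real.two_pi_pos θ0 (Complex.arg u) with hkd
      have hθueq : (θu : ℝ) = Complex.arg u - (k:ℝ) * (2 * Real.pi) := by
        have h := hdiv
        rw [zsmul_eq_mul] at h
        linarith
      rw [hθueq]
      push_cast
      rw [sub_mul, Complex.exp_sub]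
      have h2 : Complex.exp ((k:ℂ) * (2 * Real.pi) * Complex.I) = 1 := by
        have := Complex.exp_int_mul_two_pi_mul_I k
        convert this using 2
        push_cast; ring
      rw [h2, div_one]
      conv_rhs => rw [← Complex.norm_mul_exp_arg_mul_I u]
      rw [hu1]
      simp
    have hurange : θ0 + δ ≤ θu ∧ θu ≤ θ0 + 2 * Real.pi - δ := by
      by_contra hcon
      push_neg at hcon
      have hclose : ‖u - qc‖ < d := by
        rcases lt_or_ge θu (θ0 + δ) with hlt | hge
        · have hb : |θu - θ0| ≤ 1 := by
            rw [abs_le]; constructor <;> [linarith [hθumem.1]; linarith [hθumem.1, hlt, hδ1]]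
          have := exp_circle_close θu θ0 hb
          rw [huexp, ← hqcexp] at this
          have hab : |θu - θ0| < δ := by
            rw [abs_lt]; exact ⟨by linarith [hθumem.1], by linarith [hlt]⟩
          calc ‖u - qc‖ ≤ 2 * |θu - θ0| := this
            _ < 2 * δ := by linarith
            _ ≤ d / 2 := hδd2
            _ < d := by linarith
        · have hgt := hcon hge
          set a := θu - 2 * Real.pi with had
          have haexp : Complex.exp (((a : ℝ):ℂ) * Complex.I) = u := by
            rw [had]
            push_cast
            rw [sub_mul, Complex.exp_sub]
            have h2 : Complex.exp ((2 * (Real.pi:ℂ)) * Complex.I) = 1 := by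
              have h3 := Complex.exp_two_pi_mul_I
              convert h3 using 2
            rw [h2, div_one, huexp]
          have hb : |a - θ0| ≤ 1 := by
            rw [abs_le, had]
            constructor
            · linarith [hθumem.2, hδ1, hgt]
            · linarith [hθumem.2]
          have := exp_circle_close a θ0 hb
          rw [haexp, ← hqcexp] at this
          have hab : |a - θ0| < δ := by
            rw [abs_lt, had]
            exact ⟨by linarith [hgt], by linarith [hθumem.2, hδpos]⟩
          calc ‖u - qc‖ ≤ 2 * |a - θ0| := this
            _ < 2 * δ := by linarith
            _ ≤ d / 2 := hδd2
            _ < d := by linarith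
      rw [dist_comm, Complex.dist_eq] at hud
      linarith
    set t := (θu - θ0 - δ) / (2 * Real.pi - 2 * δ) with htd
    have htmem : t ∈ Icc (0:ℝ) 1 := by
      constructor
      · apply div_nonneg (by linarith [hurange.1]) hslope.le
      · rw [div_le_one hslope]
        linarith [hurange.2]
    have hθft : θf t = θu := by
      rw [hθf, htd]
      show θ0 + δ + (θu - θ0 - δ) / (2 * Real.pi - 2 * δ) * (2 * Real.pi - 2 * δ) = θu
      rw [div_mul_cancel₀ _ hslope.ne']; ring
    refine ⟨t, htmem, ?_⟩
    have hγSt : γS t = u := by rw [hγS]; dsimp only; rw [hθft, huexp]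
    have hsub2 : (⟨γS t, exp_mem_sphere _⟩ : Metric.sphere (0:ℂ) 1) = us :=
      Subtype.ext hγSt
    calc γ t = ((e ⟨γS t, exp_mem_sphere _⟩ : C) : ℂ) := rfl
      _ = ((e us : C) : ℂ) := congrArg (fun w => ((e w : C) : ℂ)) hsub2
      _ = x := by
          have h5 : e us = ⟨x, hxC⟩ := by rw [hus]; exact e.apply_symm_apply _
          exact congrArg Subtype.val h5
  · rintro z ⟨t, ht, rfl⟩
    exact (e ⟨γS t, exp_mem_sphere _⟩).2


lemma arc_log (γ : ℝ → ℂ) (hγc : ContinuousOn γ (Icc 0 1)) (hγi : Set.InjOn γ (Icc 0 1))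
    (a : ℂ) (ha : a ∉ γ '' (Icc 0 1)) :
    ∃ g : ℂ → ℂ, ContinuousOn g (γ '' (Icc 0 1)) ∧
      ∀ z ∈ γ '' (Icc 0 1), Complex.exp (g z) = z - a := by
  classical
  set J := γ '' (Icc 0 1) with hJ
  have hne : ∀ t ∈ Icc (0:ℝ) 1, γ t - a ≠ 0 := by
    intro t ht h
    exact ha ⟨t, ht, (sub_eq_zero.mp h)⟩
  obtain ⟨L, hLc, hLe⟩ := lift_exists (fun t => γ t - a) (hγc.sub continuousOn_const) hne
  have hbij : Function.Bijective (fun t : ↥(Icc (0:ℝ) 1) => (⟨γ t, mem_image_of_mem _ t.2⟩ : ↥J)) := by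
    constructor
    · intro t1 t2 h
      have := congrArg Subtype.val h
      exact Subtype.ext (hγi t1.2 t2.2 this)
    · rintro ⟨z, hz⟩
      obtain ⟨t, ht, rfl⟩ := hz
      exact ⟨⟨t, ht⟩, rfl⟩
  set eqv : ↥(Icc (0:ℝ) 1) ≃ ↥J := Equiv.ofBijective _ hbij with heqv
  have hceqv : Continuous (eqv : ↥(Icc (0:ℝ) 1) → ↥J) := by
    apply Continuous.subtype_mk
    exact hγc.restrict
  haveI : CompactSpace ↥(Icc (0:ℝ) 1) := isCompact_iff_compactSpace.mp isCompact_Icc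
  set homeo : ↥(Icc (0:ℝ) 1) ≃ₜ ↥J := hceqv.homeoOfEquivCompactToT2 with hhomeo
  refine ⟨fun z => if h : z ∈ J then L ((homeo.symm ⟨z, h⟩ : ↥(Icc (0:ℝ) 1)) : ℝ) else 0, ?_, ?_⟩
  · rw [continuousOn_iff_continuous_restrict]
    have heq : J.domRestrict (fun z => if h : z ∈ J then L ((homeo.symm ⟨z, h⟩ : ↥(Icc (0:ℝ) 1)) : ℝ) else 0)
        = fun z : ↥J => L ((homeo.symm z : ↥(Icc (0:ℝ) 1)) : ℝ) := by
      funext z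
      simp only [Set.domRestrict_apply]
      rw [dif_pos z.2, Subtype.coe_eta]
    rw [heq]
    exact hLc.restrict.comp homeo.symm.continuous
  · intro z hz
    show Complex.exp (dite (z ∈ J)
      (fun h => L ((homeo.symm ⟨z, h⟩ : ↥(Icc (0:ℝ) 1)) : ℝ)) (fun _ => 0)) = z - a
    rw [dif_pos hz]
    set t0 := homeo.symm ⟨z, hz⟩ with ht0
    have h1 : Complex.exp (L (t0 : ℝ)) = γ (t0 : ℝ) - a := hLe _ t0.2
    have h2 : γ (t0 : ℝ) = z := by
      have h3 : homeo t0 = ⟨z, hz⟩ := by rw [ht0]; exact homeo.apply_symm_apply _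
      have h4 : (homeo t0 : ℂ) = γ (t0 : ℝ) := rfl
      rw [h3] at h4
      exact h4.symm
    rw [h1, h2]

theorem jordan_image_is_boundary
    (U : Set ℂ) (hU : IsOpen U) (hUD : Metric.closedBall (0:ℂ) 1 ⊆ U)
    (φ : ℂ → ℂ) (hφ : DifferentiableOn ℂ φ U)
    (hnc : ∃ z ∈ Metric.closedBall (0:ℂ) 1, ∃ w ∈ Metric.closedBall (0:ℂ) 1, φ z ≠ φ w)
    (hJordan : Nonempty ((Metric.sphere (0:ℂ) 1) ≃ₜ (φ '' (Metric.sphere (0:ℂ) 1)))) :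
    φ '' (Metric.sphere (0:ℂ) 1) = frontier (φ '' (Metric.ball (0:ℂ) 1)) := by
  classical
  set S := Metric.sphere (0:ℂ) 1 with hS
  set D := Metric.ball (0:ℂ) 1 with hD
  set K := Metric.closedBall (0:ℂ) 1 with hK
  set C := φ '' S with hC
  set Ω := φ '' D with hΩ
  obtain ⟨e⟩ := hJordan
  have hφK : ContinuousOn φ K := (hφ.continuousOn).mono hUD
  have hDU : D ⊆ U := (ball_subset_closedBall).trans hUD
  have han : AnalyticOnNhd ℂ φ D := (hφ.mono hDU).analyticOnNhd isOpen_ball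
  have hclosure : closure D = K := closure_ball (0:ℂ) one_ne_zero
  have hφcl : ContinuousOn φ (closure D) := by rwa [hclosure]
  have hΩopen : IsOpen Ω := by
    rcases han.is_constant_or_isOpen (convex_ball (0:ℂ) 1).isPreconnected with ⟨w, hw⟩ | hopen
    · exfalso
      obtain ⟨z, hz, w', hw', hne⟩ := hnc
      have hconst : ∀ x ∈ K, φ x = w := by
        intro x hx
        rw [← hclosure] at hx
        have h2 : φ x ∈ closure (φ '' D) := hφcl.image_closure (mem_image_of_mem φ hx)
        have h3 : φ '' D ⊆ {w} := by rintro y ⟨u, hu, rfl⟩; exact hw u hu |>.symm ▸ rfl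
        have h4 : closure (φ '' D) ⊆ {w} := closure_minimal h3 isClosed_singleton
        exact h4 h2
      exact hne ((hconst z hz).trans (hconst w' hw').symm)
    · exact hopen D subset_rfl isOpen_ball
  have hKcomp : IsCompact (φ '' K) := (isCompact_closedBall _ _).image_of_continuousOn hφK
  have hΩsub : Ω ⊆ φ '' K := image_mono (f := φ) ball_subset_closedBall
  have hclΩ : closure Ω ⊆ φ '' K := closure_minimal hΩsub hKcomp.isClosed
  have hfront : frontier Ω ⊆ C := by
    intro x hx
    rw [hΩopen.frontier_eq] at hx
    obtain ⟨z, hzK, hφz⟩ := hclΩ hx.1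
    rw [hK, mem_closedBall] at hzK
    rcases lt_or_eq_of_le hzK with hlt | heq
    · exfalso
      apply hx.2
      exact ⟨z, by rwa [hD, mem_ball], hφz⟩
    · exact ⟨z, by rw [hS, mem_sphere]; exact heq, hφz⟩
  have hCcl : C ⊆ closure Ω := by
    rintro x ⟨z, hz, rfl⟩
    have hzK : z ∈ closure D := by
      rw [hclosure]
      exact sphere_subset_closedBall hz
    exact hφcl.image_closure (mem_image_of_mem φ hzK)
  have hdisj : ∀ x, x ∈ C → x ∉ Ω := by
    intro p hpC hpΩ
    have hpF : p ∉ frontier Ω := by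
      rw [hΩopen.frontier_eq]; exact fun h => h.2 hpΩ
    obtain ⟨γ, hγc, hγi, hFJ, hJC⟩ :=
      arc_containing C (frontier Ω) e hfront isClosed_frontier p hpC hpF
    set J := γ '' (Icc 0 1) with hJdef
    have hJcomp : IsCompact J := isCompact_Icc.image_of_continuousOn hγc
    have hJint : interior C = ∅ := jordan_empty_interior C e
    have haex : ∃ a, a ∈ Ω ∧ a ∉ J := by
      by_contra h
      push_neg at h
      have hsub2 : Ω ⊆ C := fun x hx => hJC (h x hx)
      have hsub3 : Ω ⊆ interior C := interior_maximal hsub2 hΩopen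
      rw [hJint] at hsub3
      exact hsub3 hpΩ
    obtain ⟨a, haΩ, haJ⟩ := haex
    obtain ⟨g, hgc, hge⟩ := arc_log γ hγc hγi a haJ
    have hunb := borsuk J hJcomp a haJ g hgc hge
    obtain ⟨R, hR⟩ := hKcomp.isBounded.subset_closedBall 0
    have hTb : ∃ b ∈ connectedComponentIn Jᶜ a, b ∉ Metric.closedBall (0:ℂ) R := by
      by_contra h
      push_neg at h
      exact hunb ((isBounded_closedBall).subset h)
    obtain ⟨b, hbT, hbR⟩ := hTb
    have hbncl : b ∉ closure Ω := fun h => hbR (hR (hclΩ h))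
    have hTpre : IsPreconnected (connectedComponentIn Jᶜ a) := isPreconnected_connectedComponentIn
    have haT : a ∈ connectedComponentIn Jᶜ a := mem_connectedComponentIn haJ
    have hTsub : connectedComponentIn Jᶜ a ⊆ Jᶜ := connectedComponentIn_subset _ _
    have hcover : connectedComponentIn Jᶜ a ⊆ Ω ∪ (closure Ω)ᶜ := by
      intro x hx
      by_cases h1 : x ∈ Ω
      · exact Or.inl h1
      by_cases h2 : x ∈ closure Ω
      · exact absurd (hFJ (by rw [hΩopen.frontier_eq]; exact ⟨h2, h1⟩)) (hTsub hx)
      · exact Or.inr h2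
    obtain ⟨y, hy⟩ := hTpre Ω (closure Ω)ᶜ hΩopen (isClosed_closure.isOpen_compl)
      hcover ⟨a, haT, haΩ⟩ ⟨b, hbT, hbncl⟩
    exact hy.2.2 (subset_closure hy.2.1)
  apply Set.Subset.antisymm
  · intro x hx
    rw [hΩopen.frontier_eq]
    exact ⟨hCcl hx, hdisj x hx⟩
  · exact hfront
end

section
/- Let φ be holomorphic on a neighborhood of the closed unit disk. Then the set of self-intersection points of the curve φ(𝕋), i.e., {λ ∈ ℂ : there exist distinct w₁, w₂ ∈ 𝕋 with φ(w₁) = φ(w₂) = λ}, is either finite or has the cardinality of the continuum. -/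
open Complex Filter Set Topology ContDiff

/-- conj-conj differentiability -/
theorem hasDerivAt_conj_conj {f : ℂ → ℂ} {d z : ℂ}
    (hf : HasDerivAt f d ((starRingEnd ℂ) z)) :
    HasDerivAt (fun w => (starRingEnd ℂ) (f ((starRingEnd ℂ) w))) ((starRingEnd ℂ) d) z := by
  rw [hasDerivAt_iff_tendsto_slope] at hf ⊢
  have h1 : Tendsto (starRingEnd ℂ) (𝓝[≠] z) (𝓝[≠] ((starRingEnd ℂ) z)) := by
    apply tendsto_nhdsWithin_of_tendsto_nhds_of_eventually_within
    · exact (Complex.continuous_conj.tendsto z).mono_left nhdsWithin_le_nhds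
    · filter_upwards [self_mem_nhdsWithin] with w hw
      simpa using fun h => hw ((starRingEnd ℂ).injective (by simpa using h))
  have h2 : Tendsto (starRingEnd ℂ) (𝓝 d) (𝓝 ((starRingEnd ℂ) d)) :=
    Complex.continuous_conj.tendsto d
  have key : ∀ w, slope (fun w => (starRingEnd ℂ) (f ((starRingEnd ℂ) w))) z w
      = (starRingEnd ℂ) (slope f ((starRingEnd ℂ) z) ((starRingEnd ℂ) w)) := by
    intro w
    simp [slope_def_field, div_eq_mul_inv, map_sub]
  rw [show slope (fun w => (starRingEnd ℂ) (f ((starRingEnd ℂ) w))) z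
      = fun w => (starRingEnd ℂ) (slope f ((starRingEnd ℂ) z) ((starRingEnd ℂ) w)) from funext key]
  exact h2.comp (hf.comp h1)

/-- composition of analytic functions, lambda form -/
theorem AnalyticAt.comp'' {g f : ℂ → ℂ} {x y : ℂ} (hg : AnalyticAt ℂ g y)
    (hf : AnalyticAt ℂ f x) (hxy : f x = y) : AnalyticAt ℂ (fun z => g (f z)) x := by
  rw [← hxy] at hg
  exact hg.comp hf

/-- local k-th root of a nonvanishing analytic function -/
theorem exists_local_root {f : ℂ → ℂ} (hf : AnalyticAt ℂ f 0) (h0 : f 0 ≠ 0) (k : ℕ) (hk : k ≠ 0) :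
    ∃ r : ℂ → ℂ, AnalyticAt ℂ r 0 ∧ r 0 ≠ 0 ∧ ∀ᶠ z in 𝓝 (0:ℂ), r z ^ k = f z := by
  obtain ⟨c, hc⟩ : ∃ c, Complex.exp c = f 0 := by
    have : f 0 ∈ Set.range Complex.exp := by rw [Complex.range_exp]; exact h0
    exact this.imp fun c h => h
  set L : ℂ → ℂ := fun z => (Complex.log (f z / f 0) + c) / k with hL
  have hfd : AnalyticAt ℂ (fun z => f z / f 0) 0 := hf.div analyticAt_const h0
  have h1 : f 0 / f 0 ∈ Complex.slitPlane := by
    rw [div_self h0]; exact Complex.one_mem_slitPlane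
  have hk' : (k:ℂ) ≠ 0 := Nat.cast_ne_zero.mpr hk
  have hlog : AnalyticAt ℂ (fun z => Complex.log (f z / f 0)) 0 :=
    (analyticAt_clog h1).comp'' hfd rfl
  have hLa : AnalyticAt ℂ L 0 := (hlog.add analyticAt_const).div analyticAt_const hk'
  refine ⟨fun z => Complex.exp (L z), (Complex.differentiable_exp.analyticAt _).comp'' hLa rfl,
    Complex.exp_ne_zero _, ?_⟩
  have hne : ∀ᶠ z in 𝓝 (0:ℂ), f z ≠ 0 := hf.continuousAt.eventually_ne h0
  filter_upwards [hne] with z hz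
  rw [← Complex.exp_nat_mul, hL]
  have : (k:ℂ) * ((Complex.log (f z / f 0) + c) / k) = Complex.log (f z / f 0) + c := by
    rw [← mul_div_assoc]; exact mul_div_cancel_left₀ _ hk'
  rw [this, Complex.exp_add, Complex.exp_log (by simp [hz, h0]), hc]
  field_simp

/-- order representation -/
theorem exists_order_rep {f : ℂ → ℂ} (hf : AnalyticAt ℂ f 0) (h00 : f 0 = 0)
    (hne : ¬ ∀ᶠ z in 𝓝 (0:ℂ), f z = 0) :
    ∃ (m : ℕ) (u : ℂ → ℂ), m ≠ 0 ∧ AnalyticAt ℂ u 0 ∧ u 0 ≠ 0 ∧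
      ∀ᶠ z in 𝓝 (0:ℂ), f z = z ^ m * u z := by
  have hord : analyticOrderAt f 0 ≠ ⊤ := by simp only [ne_eq, analyticOrderAt_eq_top]; exact hne
  obtain ⟨m, hm⟩ : ∃ m : ℕ, analyticOrderAt f 0 = m := by
    lift analyticOrderAt f 0 to ℕ using hord with m; exact ⟨m, rfl⟩
  obtain ⟨u, hu, hu0, hrep⟩ := (hf.analyticOrderAt_eq_natCast).mp hm
  have hm0 : m ≠ 0 := by
    rintro rfl
    have := hrep.self_of_nhds
    simp [h00] at this
    exact hu0 this.symm
  refine ⟨m, u, hm0, hu, hu0, ?_⟩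
  filter_upwards [hrep] with z h1
  rw [h1]; simp [smul_eq_mul]

/-- normal form f = η^k with η conformal at 0 -/
theorem exists_normal_form {f : ℂ → ℂ} (hf : AnalyticAt ℂ f 0) (h00 : f 0 = 0)
    (hne : ¬ ∀ᶠ z in 𝓝 (0:ℂ), f z = 0) :
    ∃ (k : ℕ) (η : ℂ → ℂ), k ≠ 0 ∧ AnalyticAt ℂ η 0 ∧ η 0 = 0 ∧
      HasDerivAt η (deriv η 0) 0 ∧ deriv η 0 ≠ 0 ∧ ∀ᶠ z in 𝓝 (0:ℂ), f z = η z ^ k := by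
  obtain ⟨k, u, hk0, hu, hu0, hrep⟩ := exists_order_rep hf h00 hne
  obtain ⟨r, hr, hr0, hrk⟩ := exists_local_root hu hu0 k hk0
  refine ⟨k, fun z => z * r z, hk0, analyticAt_id.mul hr, by simp, ?_, ?_, ?_⟩
  · exact (analyticAt_id.mul hr).differentiableAt.hasDerivAt
  · have : HasDerivAt (fun z : ℂ => z * r z) (r 0) 0 := by
      have h1 : HasDerivAt (fun z : ℂ => z) 1 0 := hasDerivAt_id 0
      have h2 : HasDerivAt r (deriv r 0) 0 := hr.differentiableAt.hasDerivAt
      exact (by simpa using h1.mul h2 : HasDerivAt ((fun z : ℂ => z) * r) (r 0) 0)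
    rw [this.deriv]; exact hr0
  · filter_upwards [hrep, hrk] with z h1 h2
    rw [h1, mul_pow, h2]

/-- analytic local inverse -/
theorem exists_local_inverse {η : ℂ → ℂ} (hη : AnalyticAt ℂ η 0) (h0 : η 0 = 0)
    (hd : HasDerivAt η (deriv η 0) 0) (hd0 : deriv η 0 ≠ 0) :
    ∃ N : ℂ → ℂ, N 0 = 0 ∧ (∀ᶠ y in 𝓝 (0:ℂ), AnalyticAt ℂ N y) ∧
      (∀ᶠ z in 𝓝 (0:ℂ), N (η z) = z) ∧ (∀ᶠ y in 𝓝 (0:ℂ), η (N y) = y) := by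
  have hc : ContDiffAt ℂ ω η 0 := hη.contDiffAt
  have hfd : HasFDerivAt η
      ((ContinuousLinearEquiv.unitsEquivAut ℂ (Units.mk0 _ hd0) : ℂ →L[ℂ] ℂ)) 0 :=
    hd.hasFDerivAt_equiv hd0
  have hs := hc.hasStrictFDerivAt' hfd (by simp)
  set N : ℂ → ℂ := hs.localInverse η _ 0 with hN
  have h1 : N (η 0) = 0 := hs.localInverse_apply_image
  have h2 : ∀ᶠ z in 𝓝 (0:ℂ), N (η z) = z := hs.eventually_left_inverse
  have h3 : ∀ᶠ y in 𝓝 (0:ℂ), η (N y) = y := by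
    have := hs.eventually_right_inverse; rw [h0] at this; exact this
  have h4 : ContDiffAt ℂ ω N (η 0) := hc.to_localInverse hfd (by simp)
  have h5 : ∀ᶠ y in 𝓝 (0:ℂ), ContDiffAt ℂ ω N y := by
    have := h4.eventually (n := ω) (by simp)
    rw [h0] at this; exact this
  have h6 : ∀ᶠ y in 𝓝 (0:ℂ), AnalyticAt ℂ N y := by
    obtain ⟨s, hs1, hs2, hs3⟩ := eventually_nhds_iff.mp h5
    have hdiff : DifferentiableOn ℂ N s := fun y hy =>
      ((hs1 y hy).differentiableAt (by simp)).differentiableWithinAt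
    rw [eventually_nhds_iff]
    exact ⟨s, fun y hy => hdiff.analyticAt (hs2.mem_nhds hy), hs2, hs3⟩
  rw [h0] at h1
  exact ⟨N, h1, h6, h2, h3⟩

theorem freq_pigeonhole {α : Type*} {p : ℕ → α → Prop} {F : Set α} (hF : F.Finite)
    (h : ∃ᶠ n in atTop, ∃ ζ ∈ F, p n ζ) : ∃ ζ ∈ F, ∃ᶠ n in atTop, p n ζ := by
  by_contra hcon
  push_neg at hcon
  have hall : ∀ᶠ n in atTop, ∀ ζ ∈ F, ¬ p n ζ := (Filter.eventually_all_finite hF).mpr hcon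
  obtain ⟨n, ⟨ζ, hζ, hp⟩, hnot⟩ := (h.and_eventually hall).exists
  exact hnot ζ hζ hp

theorem roots_finite (k : ℕ) (hk : k ≠ 0) : {ζ : ℂ | ζ ^ k = 1}.Finite := by
  apply Set.Finite.subset (Polynomial.nthRoots k (1:ℂ)).toFinset.finite_toSet
  intro x hx
  rw [Finset.mem_coe, Multiset.mem_toFinset, Polynomial.mem_nthRoots (Nat.pos_of_ne_zero hk)]
  exact hx

theorem conn_card {K : Set ℂ} (hK : IsPreconnected K) {x y : ℂ} (hx : x ∈ K) (hy : y ∈ K)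
    (hxy : x ≠ y) : Cardinal.continuum ≤ Cardinal.mk K := by
  have hd : (0:ℝ) < dist x y := dist_pos.mpr hxy
  have hcont : ContinuousOn (fun z => dist x z) K :=
    (continuous_const.dist continuous_id).continuousOn
  have himg : IsPreconnected ((fun z => dist x z) '' K) := hK.image _ hcont
  have h0 : (0:ℝ) ∈ (fun z => dist x z) '' K := ⟨x, hx, by simp⟩
  have h1 : dist x y ∈ (fun z => dist x z) '' K := ⟨y, hy, rfl⟩
  have hIcc : Set.Icc (0:ℝ) (dist x y) ⊆ (fun z => dist x z) '' K := himg.Icc_subset h0 h1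
  calc Cardinal.continuum = Cardinal.mk (Set.Icc (0:ℝ) (dist x y)) :=
        (Cardinal.mk_Icc_real hd).symm
    _ ≤ Cardinal.mk ((fun z => dist x z) '' K) := Cardinal.mk_le_mk_of_subset hIcc
    _ ≤ Cardinal.mk K := Cardinal.mk_image_le

theorem self_intersections_finite_or_continuum
    (U : Set ℂ) (hU : IsOpen U) (hUD : Metric.closedBall (0:ℂ) 1 ⊆ U)
    (φ : ℂ → ℂ) (hφ : DifferentiableOn ℂ φ U) :
    let A : Set ℂ := {lam | ∃ w₁ w₂ : ℂ, ‖w₁‖ = 1 ∧ ‖w₂‖ = 1 ∧ w₁ ≠ w₂ ∧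
      φ w₁ = lam ∧ φ w₂ = lam}
    A.Finite ∨ Cardinal.mk A = Cardinal.continuum := by
  intro A
  by_cases hfin : A.Finite
  · exact Or.inl hfin
  right
  have hinf : A.Infinite := hfin
  apply le_antisymm
  · exact (Cardinal.mk_set_le A).trans_eq Cardinal.mk_complex
  -- sequences of distinct self-intersection values with witnesses
  set e := hinf.natEmbedding with he
  set L : ℕ → ℂ := fun n => (e n : ℂ) with hLdef
  have hLinj : Function.Injective L := fun i j hij => e.injective (Subtype.coe_injective hij)
  have hmem : ∀ n, ∃ w₁ w₂ : ℂ, ‖w₁‖ = 1 ∧ ‖w₂‖ = 1 ∧ w₁ ≠ w₂ ∧ φ w₁ = L n ∧ φ w₂ = L n :=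
    fun n => (e n).2
  choose z w hz1 hw1 hzw hphz hphw using hmem
  -- compactness, subsequences
  have hzs : ∀ n, z n ∈ Metric.sphere (0:ℂ) 1 := fun n => by
    rw [mem_sphere_zero_iff_norm]; exact hz1 n
  obtain ⟨a, ha, ρ₁, hρ₁m, hza⟩ := (isCompact_sphere (0:ℂ) 1).tendsto_subseq hzs
  have hws : ∀ n, w (ρ₁ n) ∈ Metric.sphere (0:ℂ) 1 := fun n => by
    rw [mem_sphere_zero_iff_norm]; exact hw1 (ρ₁ n)
  obtain ⟨b, hb, ρ₂, hρ₂m, hwb⟩ := (isCompact_sphere (0:ℂ) 1).tendsto_subseq hws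
  set ρ : ℕ → ℕ := ρ₁ ∘ ρ₂ with hρdef
  set Z : ℕ → ℂ := fun n => z (ρ n) with hZdef
  set W : ℕ → ℂ := fun n => w (ρ n) with hWdef
  set Ln : ℕ → ℂ := fun n => L (ρ n) with hLndef
  have hZa : Tendsto Z atTop (𝓝 a) := hza.comp hρ₂m.tendsto_atTop
  have hWb : Tendsto W atTop (𝓝 b) := hwb
  have hLninj : Function.Injective Ln := hLinj.comp (hρ₁m.comp hρ₂m).injective
  have haU : a ∈ U := hUD (Metric.sphere_subset_closedBall ha)
  have hbU : b ∈ U := hUD (Metric.sphere_subset_closedBall hb)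
  have hφa : AnalyticAt ℂ φ a := hφ.analyticAt (hU.mem_nhds haU)
  have hφb : AnalyticAt ℂ φ b := hφ.analyticAt (hU.mem_nhds hbU)
  have ha1 : ‖a‖ = 1 := mem_sphere_zero_iff_norm.mp ha
  have hb1 : ‖b‖ = 1 := mem_sphere_zero_iff_norm.mp hb
  have hane : a ≠ 0 := by intro hcon; rw [hcon] at ha1; simp at ha1
  have hbne : b ≠ 0 := by intro hcon; rw [hcon] at hb1; simp at hb1
  -- limits of values
  have hLnZ : ∀ n, φ (Z n) = Ln n := fun n => hphz (ρ n)
  have hLnW : ∀ n, φ (W n) = Ln n := fun n => hphw (ρ n)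
  have hLn_a : Tendsto Ln atTop (𝓝 (φ a)) := by
    have := hφa.continuousAt.tendsto.comp hZa
    rwa [show φ ∘ Z = Ln from funext hLnZ] at this
  have hLn_b : Tendsto Ln atTop (𝓝 (φ b)) := by
    have := hφb.continuousAt.tendsto.comp hWb
    rwa [show φ ∘ W = Ln from funext hLnW] at this
  have hba : φ b = φ a := tendsto_nhds_unique hLn_b hLn_a
  have hE1 : ∀ᶠ n in atTop, Ln n ≠ φ a := by
    have hfin1 : {n | Ln n = φ a}.Finite :=
      Set.Subsingleton.finite fun i hi j hj => hLninj (hi.trans hj.symm)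
    have := hfin1.eventually_cofinite_notMem
    rw [Nat.cofinite_eq_atTop] at this
    exact this
  -- angular coordinates
  set sR : ℕ → ℝ := fun n => Complex.arg (Z n / a) with hsRdef
  set tR : ℕ → ℝ := fun n => Complex.arg (W n / b) with htRdef
  have hZeq : ∀ n, Z n = a * Complex.exp (↑(sR n) * I) := by
    intro n
    have habs : ‖Z n / a‖ = 1 := by
      rw [norm_div]
      rw [hz1 (ρ n), ha1, div_one]
    have h2 := Complex.norm_mul_exp_arg_mul_I (Z n / a)
    rw [habs] at h2
    simp only [ofReal_one, one_mul] at h2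
    show Z n = a * Complex.exp (((Z n / a).arg : ℝ) * I)
    rw [h2]
    field_simp
  have hWeq : ∀ n, W n = b * Complex.exp (↑(tR n) * I) := by
    intro n
    have habs : ‖W n / b‖ = 1 := by
      rw [norm_div]
      rw [hw1 (ρ n), hb1, div_one]
    have h2 := Complex.norm_mul_exp_arg_mul_I (W n / b)
    rw [habs] at h2
    simp only [ofReal_one, one_mul] at h2
    show W n = b * Complex.exp (((W n / b).arg : ℝ) * I)
    rw [h2]
    field_simp
  have hsR : Tendsto sR atTop (𝓝 0) := by
    have h1 : Tendsto (fun n => Z n / a) atTop (𝓝 1) := by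
      have := hZa.div_const a
      rwa [div_self hane] at this
    have h2 : ContinuousAt Complex.arg 1 := Complex.continuousAt_arg Complex.one_mem_slitPlane
    have := h2.tendsto.comp h1
    rwa [Complex.arg_one] at this
  have htR : Tendsto tR atTop (𝓝 0) := by
    have h1 : Tendsto (fun n => W n / b) atTop (𝓝 1) := by
      have := hWb.div_const b
      rwa [div_self hbne] at this
    have h2 : ContinuousAt Complex.arg 1 := Complex.continuousAt_arg Complex.one_mem_slitPlane
    have := h2.tendsto.comp h1
    rwa [Complex.arg_one] at this
  have hsRcoe : Tendsto (fun n => ((sR n : ℝ) : ℂ)) atTop (𝓝 0) := by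
    have := (Complex.continuous_ofReal.tendsto 0).comp hsR
    simpa [Function.comp_def] using this
  have htRcoe : Tendsto (fun n => ((tR n : ℝ) : ℂ)) atTop (𝓝 0) := by
    have := (Complex.continuous_ofReal.tendsto 0).comp htR
    simpa [Function.comp_def] using this
  -- the two local curves
  set g : ℂ → ℂ := fun s => φ (a * Complex.exp (s * I)) with hgdef
  set q : ℂ → ℂ := fun t => φ (b * Complex.exp (t * I)) with hqdef
  have hgLn : ∀ n, g ((sR n : ℝ) : ℂ) = Ln n := by
    intro n
    show φ (a * Complex.exp (↑(sR n) * I)) = Ln n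
    rw [← hZeq n]; exact hLnZ n
  have hqLn : ∀ n, q ((tR n : ℝ) : ℂ) = Ln n := by
    intro n
    show φ (b * Complex.exp (↑(tR n) * I)) = Ln n
    rw [← hWeq n]; exact hLnW n
  have hg0 : g 0 = φ a := by show φ (a * Complex.exp (0 * I)) = φ a; simp
  have hq0 : q 0 = φ a := by show φ (b * Complex.exp (0 * I)) = φ a; simp [hba]
  have hga : AnalyticAt ℂ (fun s => g s - φ a) 0 := by
    apply AnalyticAt.sub _ analyticAt_const
    apply hφa.comp'' (analyticAt_const.mul
      ((Complex.differentiable_exp.analyticAt _).comp'' (analyticAt_id.mul analyticAt_const) rfl))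
    simp
  have hqa : AnalyticAt ℂ (fun t => q t - φ a) 0 := by
    apply AnalyticAt.sub _ analyticAt_const
    apply hφb.comp'' (analyticAt_const.mul
      ((Complex.differentiable_exp.analyticAt _).comp'' (analyticAt_id.mul analyticAt_const) rfl))
    simp
  have hgne : ¬ ∀ᶠ s in 𝓝 (0:ℂ), g s - φ a = 0 := by
    intro hcon
    obtain ⟨n, h1, h2⟩ := ((hsRcoe.eventually hcon).and hE1).exists
    rw [hgLn n, sub_eq_zero] at h1
    exact h2 h1
  have hqne : ¬ ∀ᶠ t in 𝓝 (0:ℂ), q t - φ a = 0 := by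
    intro hcon
    obtain ⟨n, h1, h2⟩ := ((htRcoe.eventually hcon).and hE1).exists
    rw [hqLn n, sub_eq_zero] at h1
    exact h2 h1
  -- normal form on the b-side, order representation on the a-side
  obtain ⟨k, η, hk0, hηa, hη0, hηd, hηd0, hηrep⟩ :=
    exists_normal_form hqa (by simp [hq0]) hqne
  obtain ⟨m, u, hm0, hua, hu0, hurep⟩ := exists_order_rep hga (by simp [hg0]) hgne
  obtain ⟨N, hN0, hNa, hNl, hNr⟩ := exists_local_inverse hηa hη0 hηd hηd0
  have hkpos : (0:ℝ) < (k:ℝ) := by exact_mod_cast Nat.pos_of_ne_zero hk0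
  -- Puiseux substitution on the a-side
  set σR : ℕ → ℝ := fun n => |sR n| ^ ((k:ℝ)⁻¹) with hσRdef
  have hσRk : ∀ n, (σR n) ^ k = |sR n| := by
    intro n
    rw [hσRdef]
    rw [← Real.rpow_natCast (|sR n| ^ ((k:ℝ)⁻¹)) k, ← Real.rpow_mul (abs_nonneg _),
      inv_mul_cancel₀ (ne_of_gt hkpos), Real.rpow_one]
  have hσR0 : Tendsto σR atTop (𝓝 0) := by
    have hc : ContinuousAt (fun x : ℝ => x ^ ((k:ℝ)⁻¹)) 0 :=
      Real.continuousAt_rpow_const 0 _ (Or.inr (by positivity))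
    have habs : Tendsto (fun n => |sR n|) atTop (𝓝 0) := by
      simpa using hsR.abs
    have := hc.tendsto.comp habs
    simpa [Function.comp_def, Real.zero_rpow (show ((k:ℝ)⁻¹) ≠ 0 from by positivity)] using this
  have hσRcoe : Tendsto (fun n => ((σR n : ℝ) : ℂ)) atTop (𝓝 0) := by
    have := (Complex.continuous_ofReal.tendsto 0).comp hσR0
    simpa [Function.comp_def] using this
  -- sign pigeonhole
  have hsign : ∀ n, ∃ ε ∈ ({1, -1} : Set ℝ), sR n = ε * σR n ^ k := by
    intro n
    rcases abs_cases (sR n) with ⟨h1, _⟩ | ⟨h1, _⟩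
    · exact ⟨1, by simp, by rw [one_mul, hσRk n, h1]⟩
    · exact ⟨-1, by simp, by rw [hσRk n, h1]; ring⟩
  obtain ⟨e1, he1mem, hfreq1⟩ := freq_pigeonhole
    ((Set.finite_singleton (-1:ℝ)).insert 1) ((Filter.Eventually.of_forall hsign).frequently)
  have he1ne : (e1:ℂ) ≠ 0 := by
    rcases he1mem with h | h <;> rw [h] <;> norm_num
  -- construction of β with β^k = g(e1 σ^k) - φ a
  set V : ℂ → ℂ := fun σ => (e1:ℂ) ^ m * u ((e1:ℂ) * σ ^ k) with hVdef
  have hVa : AnalyticAt ℂ V 0 := by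
    apply AnalyticAt.mul analyticAt_const
    apply hua.comp'' (analyticAt_const.mul (analyticAt_id.pow k))
    simp [zero_pow hk0]
  have hV0 : V 0 ≠ 0 := by
    have : V 0 = (e1:ℂ) ^ m * u 0 := by
      show (e1:ℂ) ^ m * u ((e1:ℂ) * 0 ^ k) = _
      rw [zero_pow hk0, mul_zero]
    rw [this]
    exact mul_ne_zero (pow_ne_zero _ he1ne) hu0
  obtain ⟨c, hca, hc0, hck⟩ := exists_local_root hVa hV0 k hk0
  set β : ℂ → ℂ := fun σ => σ ^ m * c σ with hβdef
  have hβa : AnalyticAt ℂ β 0 := (analyticAt_id.pow m).mul hca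
  have hβ0 : β 0 = 0 := by show (0:ℂ) ^ m * c 0 = 0; rw [zero_pow hm0, zero_mul]
  have hβrep : ∀ᶠ σ in 𝓝 (0:ℂ), β σ ^ k = g ((e1:ℂ) * σ ^ k) - φ a := by
    have hcont : ContinuousAt (fun σ : ℂ => (e1:ℂ) * σ ^ k) 0 :=
      (continuous_const.mul (continuous_pow k)).continuousAt
    have h00 : (e1:ℂ) * (0:ℂ) ^ k = 0 := by rw [zero_pow hk0, mul_zero]
    have hpull : ∀ᶠ σ in 𝓝 (0:ℂ),
        g ((e1:ℂ) * σ ^ k) - φ a = ((e1:ℂ) * σ ^ k) ^ m * u ((e1:ℂ) * σ ^ k) := by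
      have ht := hcont.tendsto
      rw [h00] at ht
      exact ht.eventually hurep
    filter_upwards [hpull, hck] with σ h1 h2
    rw [h1]
    show (σ ^ m * c σ) ^ k = _
    rw [mul_pow, h2, hVdef]
    ring
  -- root-of-unity pigeonhole
  have hEb : ∀ᶠ n in atTop, q ((tR n : ℝ) : ℂ) - φ a = η ((tR n : ℝ) : ℂ) ^ k :=
    htRcoe.eventually hηrep
  have hEc : ∀ᶠ n in atTop, β ((σR n : ℝ) : ℂ) ^ k = g ((e1:ℂ) * ((σR n : ℝ) : ℂ) ^ k) - φ a :=
    hσRcoe.eventually hβrep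
  have hEd : ∀ᶠ n in atTop, N (η ((tR n : ℝ) : ℂ)) = ((tR n : ℝ) : ℂ) :=
    htRcoe.eventually hNl
  have hfreq2 : ∃ᶠ n in atTop, ∃ ζ ∈ {ζ : ℂ | ζ ^ k = 1},
      (sR n = e1 * σR n ^ k ∧ η ((tR n : ℝ) : ℂ) = ζ * β ((σR n : ℝ) : ℂ)) := by
    apply (hfreq1.and_eventually (hE1.and (hEb.and hEc))).mono
    rintro n ⟨hQ1, hA, hB, hC⟩
    have hcoe : (e1:ℂ) * ((σR n : ℝ) : ℂ) ^ k = ((sR n : ℝ) : ℂ) := by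
      rw [hQ1]; push_cast; ring
    have hβk : β ((σR n : ℝ) : ℂ) ^ k = Ln n - φ a := by
      rw [hC, hcoe, hgLn n]
    have hβne : β ((σR n : ℝ) : ℂ) ≠ 0 := by
      intro h0
      rw [h0, zero_pow hk0] at hβk
      exact hA (by linear_combination -hβk)
    have hηk : η ((tR n : ℝ) : ℂ) ^ k = Ln n - φ a := by
      rw [← hB, hqLn n]
    refine ⟨η ((tR n : ℝ) : ℂ) / β ((σR n : ℝ) : ℂ), ?_, hQ1, by field_simp⟩
    show (η ((tR n : ℝ) : ℂ) / β ((σR n : ℝ) : ℂ)) ^ k = 1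
    rw [div_pow, hηk, hβk, div_self (sub_ne_zero.mpr hA)]
  obtain ⟨ζ, hζmem, hfreq3⟩ := freq_pigeonhole (roots_finite k hk0) hfreq2
  have hζk : ζ ^ k = 1 := hζmem
  -- ψ and its reality
  set ψ : ℂ → ℂ := fun σ => N (ζ * β σ) with hψdef
  have hψ0 : ψ 0 = 0 := by show N (ζ * β 0) = 0; rw [hβ0, mul_zero, hN0]
  have hNa0 : AnalyticAt ℂ N 0 := hNa.self_of_nhds
  have hψa : AnalyticAt ℂ ψ 0 :=
    hNa0.comp'' (analyticAt_const.mul hβa) (by rw [hβ0, mul_zero])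
  have hζβcont : ContinuousAt (fun σ : ℂ => ζ * β σ) 0 :=
    continuousAt_const.mul hβa.continuousAt
  have hζβ0 : ζ * β 0 = 0 := by rw [hβ0, mul_zero]
  have hζβtend : Tendsto (fun σ : ℂ => ζ * β σ) (𝓝 0) (𝓝 0) := by
    have := hζβcont.tendsto; rwa [hζβ0] at this
  have hψdiffev : ∀ᶠ σ in 𝓝 (0:ℂ), DifferentiableAt ℂ ψ σ := by
    filter_upwards [hζβtend.eventually hNa, hβa.eventually_analyticAt] with σ h1 h2
    exact (h1.differentiableAt.comp σ ((differentiableAt_const ζ).mul h2.differentiableAt) :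
      DifferentiableAt ℂ (fun σ => N (ζ * β σ)) σ)
  set ψs : ℂ → ℂ := fun σ => (starRingEnd ℂ) (ψ ((starRingEnd ℂ) σ)) with hψsdef
  have hψsdiff : ∀ᶠ σ in 𝓝 (0:ℂ), DifferentiableAt ℂ ψs σ := by
    have hconj : Tendsto (starRingEnd ℂ) (𝓝 (0:ℂ)) (𝓝 0) := by
      have := Complex.continuous_conj.tendsto (0:ℂ)
      simpa using this
    filter_upwards [hconj.eventually hψdiffev] with σ hσ
    exact (hasDerivAt_conj_conj hσ.hasDerivAt).differentiableAt
  have hψsa : AnalyticAt ℂ ψs 0 := by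
    obtain ⟨s, hs1, hs2, hs3⟩ := eventually_nhds_iff.mp hψsdiff
    have hdo : DifferentiableOn ℂ ψs s := fun x hx => (hs1 x hx).differentiableWithinAt
    exact hdo.analyticAt (hs2.mem_nhds hs3)
  set Δ : ℂ → ℂ := fun σ => ψ σ - ψs σ with hΔdef
  have hΔa : AnalyticAt ℂ Δ 0 := hψa.sub hψsa
  -- facts at the frequent indices
  have hkey : ∀ᶠ n in atTop, (Ln n ≠ φ a → (0 < σR n ∧
      (η ((tR n : ℝ) : ℂ) = ζ * β ((σR n : ℝ) : ℂ) → ψ ((σR n : ℝ) : ℂ) = ((tR n : ℝ) : ℂ)))) := by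
    filter_upwards [hEd] with n hD hA
    have hZne : Z n ≠ a := by
      intro hcon
      apply hA
      rw [← hLnZ n, hcon]
    have hsRne : sR n ≠ 0 := by
      intro hcon
      apply hZne
      rw [hZeq n, hcon]
      simp
    constructor
    · exact Real.rpow_pos_of_pos (abs_pos.mpr hsRne) _
    · intro hQ2
      show N (ζ * β ((σR n : ℝ) : ℂ)) = _
      rw [← hQ2, hD]
  have hfreq4 : ∃ᶠ x in 𝓝[≠] (0:ℂ), Δ x = 0 := by
    have key : ∃ᶠ n in atTop, (((σR n : ℝ) : ℂ) ≠ 0 ∧ Δ ((σR n : ℝ) : ℂ) = 0) := by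
      apply (hfreq3.and_eventually (hE1.and hkey)).mono
      rintro n ⟨⟨hQ1, hQ2⟩, hA, hK⟩
      obtain ⟨hpos, hψt⟩ := hK hA
      have hψval := hψt hQ2
      constructor
      · exact Complex.ofReal_ne_zero.mpr (ne_of_gt hpos)
      · show ψ ((σR n : ℝ) : ℂ) - (starRingEnd ℂ) (ψ ((starRingEnd ℂ) ((σR n : ℝ) : ℂ))) = 0
        rw [Complex.conj_ofReal, hψval, Complex.conj_ofReal, sub_self]
    have h2 := hσRcoe.frequently (p := fun x => x ≠ 0 ∧ Δ x = 0) key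
    rw [frequently_nhdsWithin_iff]
    apply h2.mono
    rintro x ⟨hx1, hx2⟩
    exact ⟨hx2, hx1⟩
  have hΔ0 : ∀ᶠ σ in 𝓝 (0:ℂ), Δ σ = 0 := hΔa.frequently_zero_iff_eventually_zero.mp hfreq4
  -- D detects distinctness of the two circle points
  set D : ℂ → ℂ := fun σ => a * Complex.exp ((e1:ℂ) * σ ^ k * I) -
    b * Complex.exp (ψ σ * I) with hDdef
  have hDa : AnalyticAt ℂ D 0 := by
    apply AnalyticAt.sub
    · exact analyticAt_const.mul ((Complex.differentiable_exp.analyticAt _).comp''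
        ((analyticAt_const.mul (analyticAt_id.pow k)).mul analyticAt_const) rfl)
    · exact analyticAt_const.mul ((Complex.differentiable_exp.analyticAt _).comp''
        (hψa.mul analyticAt_const) rfl)
  have hDfreq : ∃ᶠ n in atTop, D ((σR n : ℝ) : ℂ) ≠ 0 := by
    apply (hfreq3.and_eventually (hE1.and hkey)).mono
    rintro n ⟨⟨hQ1, hQ2⟩, hA, hK⟩
    obtain ⟨hpos, hψt⟩ := hK hA
    have hψval := hψt hQ2
    have hcoe : (e1:ℂ) * ((σR n : ℝ) : ℂ) ^ k = ((sR n : ℝ) : ℂ) := by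
      rw [hQ1]; push_cast; ring
    show a * Complex.exp ((e1:ℂ) * ((σR n : ℝ) : ℂ) ^ k * I) -
      b * Complex.exp (ψ ((σR n : ℝ) : ℂ) * I) ≠ 0
    rw [hcoe, hψval, ← hZeq n, ← hWeq n]
    exact sub_ne_zero.mpr (hzw (ρ n))
  have hDne : ∀ᶠ σ in 𝓝[≠] (0:ℂ), D σ ≠ 0 := by
    rcases hDa.eventually_eq_zero_or_eventually_ne_zero with hcase | hcase
    · exfalso
      obtain ⟨n, h1, h2⟩ := (hDfreq.and_eventually (hσRcoe.eventually hcase)).exists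
      exact h1 h2
    · exact hcase
  -- the value curve
  set Λ : ℂ → ℂ := fun σ => φ a + β σ ^ k with hΛdef
  have hΛev : ∀ᶠ σ in 𝓝 (0:ℂ), AnalyticAt ℂ Λ σ :=
    hβa.eventually_analyticAt.mono fun σ hσ => analyticAt_const.add (hσ.pow k)
  -- extract a ball
  have hN3 : ∀ᶠ σ in 𝓝 (0:ℂ), η (ψ σ) = ζ * β σ := hζβtend.eventually hNr
  have hψcont : ContinuousAt ψ 0 := hψa.continuousAt
  have hψtend : Tendsto ψ (𝓝 0) (𝓝 0) := by
    have := hψcont.tendsto; rwa [hψ0] at this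
  have hN4 : ∀ᶠ σ in 𝓝 (0:ℂ), q (ψ σ) - φ a = η (ψ σ) ^ k := hψtend.eventually hηrep
  have hN6 : ∀ᶠ σ in 𝓝 (0:ℂ), (σ ≠ 0 → D σ ≠ 0) := by
    rw [eventually_nhdsWithin_iff] at hDne
    apply hDne.mono
    intro σ hσ hne
    exact hσ hne
  have hbig : ∀ᶠ σ in 𝓝 (0:ℂ), Δ σ = 0 ∧ (β σ ^ k = g ((e1:ℂ) * σ ^ k) - φ a) ∧
      (η (ψ σ) = ζ * β σ) ∧ (q (ψ σ) - φ a = η (ψ σ) ^ k) ∧ AnalyticAt ℂ Λ σ ∧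
      (σ ≠ 0 → D σ ≠ 0) := by
    filter_upwards [hΔ0, hβrep, hN3, hN4, hΛev, hN6] with σ h1 h2 h3 h4 h5 h6
    exact ⟨h1, h2, h3, h4, h5, h6⟩
  obtain ⟨r, hr0, hball⟩ := Metric.eventually_nhds_iff_ball.mp hbig
  -- membership of the arc of values in A
  have hmemA : ∀ x : ℝ, 0 < x → x < r → Λ ((x : ℝ) : ℂ) ∈ A := by
    intro x hx0 hxr
    have hxball : ((x : ℝ) : ℂ) ∈ Metric.ball (0:ℂ) r := by
      rw [Metric.mem_ball, dist_zero_right, Complex.norm_real, Real.norm_eq_abs,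
        abs_of_pos hx0]
      exact hxr
    obtain ⟨hC1, hC2, hC3, hC4, _, hC6⟩ := hball _ hxball
    have hxne : ((x : ℝ) : ℂ) ≠ 0 := Complex.ofReal_ne_zero.mpr (ne_of_gt hx0)
    have hψconj : (starRingEnd ℂ) (ψ ((x : ℝ) : ℂ)) = ψ ((x : ℝ) : ℂ) := by
      have h1 : ψ ((x : ℝ) : ℂ) - (starRingEnd ℂ) (ψ ((starRingEnd ℂ) ((x : ℝ) : ℂ))) = 0 := hC1
      rw [Complex.conj_ofReal] at h1
      linear_combination -h1
    have hψim : (ψ ((x : ℝ) : ℂ)).im = 0 := Complex.conj_eq_iff_im.mp hψconj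
    refine ⟨a * Complex.exp ((e1:ℂ) * ((x : ℝ) : ℂ) ^ k * I),
      b * Complex.exp (ψ ((x : ℝ) : ℂ) * I), ?_, ?_, ?_, ?_, ?_⟩
    · rw [norm_mul, ha1, one_mul]
      have hcast : (e1:ℂ) * ((x : ℝ) : ℂ) ^ k = ((e1 * x ^ k : ℝ) : ℂ) := by push_cast; ring
      rw [hcast, Complex.norm_exp_ofReal_mul_I]
    · rw [norm_mul, hb1, one_mul]
      have hre : ψ ((x : ℝ) : ℂ) = (((ψ ((x : ℝ) : ℂ)).re : ℝ) : ℂ) :=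
        (Complex.ext (by simp) (by simp [hψim])).symm.symm
      rw [show ψ ((x : ℝ) : ℂ) = (((ψ ((x : ℝ) : ℂ)).re : ℝ) : ℂ) from
        Complex.ext (by simp) (by simp [hψim])]
      rw [Complex.norm_exp_ofReal_mul_I]
    · intro hcon
      exact hC6 hxne (by rw [hDdef]; simp only; rw [hcon, sub_self])
    · show g ((e1:ℂ) * ((x : ℝ) : ℂ) ^ k) = Λ ((x : ℝ) : ℂ)
      show g ((e1:ℂ) * ((x : ℝ) : ℂ) ^ k) = φ a + β ((x : ℝ) : ℂ) ^ k
      linear_combination -hC2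
    · show q (ψ ((x : ℝ) : ℂ)) = Λ ((x : ℝ) : ℂ)
      show q (ψ ((x : ℝ) : ℂ)) = φ a + β ((x : ℝ) : ℂ) ^ k
      have h1 : η (ψ ((x : ℝ) : ℂ)) ^ k = β ((x : ℝ) : ℂ) ^ k := by
        rw [hC3, mul_pow, hζk, one_mul]
      linear_combination hC4 + h1
  -- nonconstancy of the values
  have hhalf : (0:ℝ) < r / 2 := by linarith
  have htwo : ∃ x1, 0 < x1 ∧ x1 < r ∧ Λ ((x1 : ℝ) : ℂ) ≠ Λ (((r/2 : ℝ) : ℝ) : ℂ) := by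
    by_contra hcon
    push_neg at hcon
    have hconst : ∀ x : ℝ, 0 < x → x < r → Λ ((x : ℝ) : ℂ) = Λ (((r/2 : ℝ) : ℝ) : ℂ) :=
      fun x h1 h2 => hcon x h1 h2
    have hAOn : AnalyticOnNhd ℂ (fun σ => Λ σ - Λ (((r/2 : ℝ) : ℝ) : ℂ)) (Metric.ball (0:ℂ) r) :=
      fun σ hσ => ((hball σ hσ).2.2.2.2.1).sub analyticAt_const
    have hmemc : (((r/2 : ℝ) : ℝ) : ℂ) ∈ Metric.ball (0:ℂ) r := by
      rw [Metric.mem_ball, dist_zero_right, Complex.norm_real, Real.norm_eq_abs,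
        abs_of_pos hhalf]
      linarith
    have hfreqz : ∃ᶠ x in 𝓝[≠] (((r/2 : ℝ) : ℝ) : ℂ), (fun σ => Λ σ - Λ (((r/2 : ℝ) : ℝ) : ℂ)) x = 0 := by
      set uu : ℕ → ℝ := fun j => r/2 + (r/4) * (1 / (j + 1)) with huu
      have huu_mem : ∀ j : ℕ, 0 < uu j ∧ uu j < r := by
        intro j
        have hj1 : (0:ℝ) < 1 / ((j:ℝ) + 1) := by positivity
        have hj2 : 1 / ((j:ℝ) + 1) ≤ 1 := by
          rw [div_le_one (by positivity)]
          linarith [Nat.cast_nonneg (α := ℝ) j]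
        constructor
        · have : (0:ℝ) < r/4 * (1 / ((j:ℝ)+1)) := by positivity
          simp only [huu]; linarith
        · have : r/4 * (1 / ((j:ℝ)+1)) ≤ r/4 * 1 := by
            apply mul_le_mul_of_nonneg_left hj2 (by linarith)
          simp only [huu]; linarith
      have huu_ne : ∀ j : ℕ, uu j ≠ r / 2 := by
        intro j
        have hj1 : (0:ℝ) < r/4 * (1 / ((j:ℝ)+1)) := by positivity
        simp only [huu]; intro hcon2; linarith
      have huu_tend : Tendsto uu atTop (𝓝 (r/2)) := by
        have h0 : Tendsto (fun n : ℕ => 1 / ((n:ℝ) + 1)) atTop (𝓝 0) :=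
          tendsto_one_div_add_atTop_nhds_zero_nat
        have h1 := h0.const_mul (r/4)
        have h2 := (tendsto_const_nhds (x := r/2) (f := atTop (α := ℕ))).add h1
        rw [huu]
        simpa using h2
      have huucoe : Tendsto (fun j => ((uu j : ℝ) : ℂ)) atTop (𝓝 (((r/2 : ℝ) : ℝ) : ℂ)) :=
        (Complex.continuous_ofReal.tendsto _).comp huu_tend
      have hkey2 : ∀ j : ℕ, ((uu j : ℝ) : ℂ) ≠ (((r/2 : ℝ) : ℝ) : ℂ) ∧
          Λ ((uu j : ℝ) : ℂ) - Λ (((r/2 : ℝ) : ℝ) : ℂ) = 0 := by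
        intro j
        constructor
        · exact fun hcon2 => huu_ne j (Complex.ofReal_inj.mp hcon2)
        · rw [hconst (uu j) (huu_mem j).1 (huu_mem j).2, sub_self]
      have := huucoe.frequently
        (p := fun x => x ≠ (((r/2 : ℝ) : ℝ) : ℂ) ∧ Λ x - Λ (((r/2 : ℝ) : ℝ) : ℂ) = 0)
        (Filter.Eventually.of_forall hkey2).frequently
      rw [frequently_nhdsWithin_iff]
      apply this.mono
      rintro x ⟨hx1, hx2⟩
      exact ⟨hx2, hx1⟩
    have hEqOn := hAOn.eqOn_zero_of_preconnected_of_frequently_eq_zero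
      (convex_ball (0:ℂ) r).isPreconnected hmemc hfreqz
    -- contradiction with two distinct values Λ(σR n) = Ln n
    have hfreq5 : ∃ᶠ n in atTop, (Λ ((σR n : ℝ) : ℂ) = Ln n ∧
        ((σR n : ℝ) : ℂ) ∈ Metric.ball (0:ℂ) r) := by
      apply (hfreq3.and_eventually (hE1.and (hEc.and
        (hσRcoe.eventually (Metric.ball_mem_nhds (0:ℂ) hr0))))).mono
      rintro n ⟨⟨hQ1, hQ2⟩, hA, hC, hBall⟩
      have hcoe : (e1:ℂ) * ((σR n : ℝ) : ℂ) ^ k = ((sR n : ℝ) : ℂ) := by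
        rw [hQ1]; push_cast; ring
      refine ⟨?_, hBall⟩
      show φ a + β ((σR n : ℝ) : ℂ) ^ k = Ln n
      rw [hC, hcoe, hgLn n]
      ring
    obtain ⟨n₁, _, hn₁⟩ := (Filter.frequently_atTop.mp hfreq5) 0
    obtain ⟨n₂, hn₂ge, hn₂⟩ := (Filter.frequently_atTop.mp hfreq5) (n₁ + 1)
    have hv₁ : Ln n₁ = Λ (((r/2 : ℝ) : ℝ) : ℂ) := by
      have := hEqOn hn₁.2
      simp only [Pi.zero_apply] at this
      rw [← hn₁.1]
      linear_combination this
    have hv₂ : Ln n₂ = Λ (((r/2 : ℝ) : ℝ) : ℂ) := by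
      have := hEqOn hn₂.2
      simp only [Pi.zero_apply] at this
      rw [← hn₂.1]
      linear_combination this
    have : n₁ = n₂ := hLninj (hv₁.trans hv₂.symm)
    omega
  -- conclusion: image of the interval is connected with two points, inside A
  obtain ⟨x1, hx10, hx1r, hΛne⟩ := htwo
  set K : Set ℂ := (fun x : ℝ => Λ ((x : ℝ) : ℂ)) '' (Set.Ioo 0 r) with hKdef
  have hKA : K ⊆ A := by
    rintro _ ⟨x, hx, rfl⟩
    exact hmemA x hx.1 hx.2
  have hKconn : IsPreconnected K := by
    apply isPreconnected_Ioo.image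
    intro x hx
    have hxball : ((x : ℝ) : ℂ) ∈ Metric.ball (0:ℂ) r := by
      rw [Metric.mem_ball, dist_zero_right, Complex.norm_real, Real.norm_eq_abs,
        abs_of_pos hx.1]
      exact hx.2
    have hΛx : AnalyticAt ℂ Λ ((x : ℝ) : ℂ) := (hball _ hxball).2.2.2.2.1
    exact (hΛx.continuousAt.comp Complex.continuous_ofReal.continuousAt).continuousWithinAt
  have hmem1 : Λ ((x1 : ℝ) : ℂ) ∈ K := ⟨x1, ⟨hx10, hx1r⟩, rfl⟩
  have hmem2 : Λ (((r/2 : ℝ) : ℝ) : ℂ) ∈ K := ⟨r/2, ⟨hhalf, by linarith⟩, rfl⟩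
  calc Cardinal.continuum ≤ Cardinal.mk K := conn_card hKconn hmem1 hmem2 hΛne
    _ ≤ Cardinal.mk A := Cardinal.mk_le_mk_of_subset hKA
end

section
/- Let Q be a polynomial of prime degree q with no zeros in the closed unit disk, and let P be a nonconstant polynomial with deg P < q having at least one zero in the open unit disk 𝔻. Then R = P/Q cannot be written as R = M ∘ B on 𝔻 with M a Möbius transformation and B a finite Blaschke product of order q. -/
open Complex

private lemma one_sub_conj_mul_ne_zero {α z : ℂ} (hα : ‖α‖ < 1) (hz : ‖z‖ ≤ 1) :
    1 - (starRingEnd ℂ) α * z ≠ 0 := by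
  intro h
  have h1 : (starRingEnd ℂ) α * z = 1 := by linear_combination -h
  have : ‖(starRingEnd ℂ) α * z‖ < 1 := by
    rw [norm_mul, RCLike.norm_conj]
    calc ‖α‖ * ‖z‖ ≤ ‖α‖ * 1 := by
          exact mul_le_mul_of_nonneg_left hz (norm_nonneg _)
      _ = ‖α‖ := mul_one _
      _ < 1 := hα
  rw [h1] at this; simp at this

private lemma blaschke_factor_lt {α z : ℂ} (hα : ‖α‖ < 1) (hz : ‖z‖ < 1) :
    ‖α - z‖ < ‖1 - (starRingEnd ℂ) α * z‖ := by
  have key : Complex.normSq (1 - (starRingEnd ℂ) α * z) - Complex.normSq (α - z)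
      = (1 - Complex.normSq α) * (1 - Complex.normSq z) := by
    simp [Complex.normSq_apply, Complex.sub_re, Complex.sub_im, Complex.mul_re,
      Complex.mul_im, Complex.conj_re, Complex.conj_im]
    ring
  have hα2 : Complex.normSq α < 1 := by
    rw [Complex.normSq_eq_norm_sq]
    nlinarith [norm_nonneg α]
  have hz2 : Complex.normSq z < 1 := by
    rw [Complex.normSq_eq_norm_sq]
    nlinarith [norm_nonneg z]
  have h1 : Complex.normSq (α - z) < Complex.normSq (1 - (starRingEnd ℂ) α * z) := by
    nlinarith
  have h2 : ‖α - z‖ ^ 2 < ‖1 - (starRingEnd ℂ) α * z‖ ^ 2 := by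
    rw [Complex.sq_norm, Complex.sq_norm]
    exact h1
  exact lt_of_pow_lt_pow_left₀ 2 (norm_nonneg _) h2

theorem prime_degree_rational_not_moebius_blaschke
    (P Q : Polynomial ℂ) (hq : Nat.Prime Q.natDegree)
    (hQ : ∀ z : ℂ, ‖z‖ ≤ 1 → Q.eval z ≠ 0)
    (hP : 0 < P.natDegree) (hdeg : P.natDegree < Q.natDegree)
    (hzero : ∃ z : ℂ, ‖z‖ < 1 ∧ P.eval z = 0) :
    ¬ ∃ (M B : ℂ → ℂ) (a b c d cc : ℂ) (α : Fin Q.natDegree → ℂ),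
        a * d - b * c ≠ 0 ∧
        (∀ z : ℂ, M z = (a * z + b) / (c * z + d)) ∧
        ‖cc‖ = 1 ∧ (∀ j, ‖α j‖ < 1) ∧
        (∀ z : ℂ, B z = cc * ∏ j, (α j - z) / (1 - (starRingEnd ℂ) (α j) * z)) ∧
        (∀ z : ℂ, ‖z‖ < 1 → P.eval z / Q.eval z = M (B z)) := by
  rintro ⟨M, B, a, b, c, d, cc, α, hdet, hM, hcc, hα, hB, hR⟩
  have hqpos : 0 < Q.natDegree := hq.pos
  have hQ0 : Q ≠ 0 := by
    intro h; rw [h] at hq; simp at hq; exact Nat.not_prime_zero hq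
  have hP0 : P ≠ 0 := by
    intro h; rw [h] at hP; simp at hP
  set N : Polynomial ℂ := Polynomial.C cc * ∏ j, (Polynomial.C (α j) - Polynomial.X) with hNdef
  set D : Polynomial ℂ :=
    ∏ j : Fin Q.natDegree, (1 - Polynomial.C ((starRingEnd ℂ) (α j)) * Polynomial.X) with hDdef
  have hNe : ∀ z, N.eval z = cc * ∏ j, (α j - z) := by
    intro z; simp [hNdef, Polynomial.eval_prod]
  have hDe : ∀ z, D.eval z = ∏ j, (1 - (starRingEnd ℂ) (α j) * z) := by
    intro z; simp [hDdef, Polynomial.eval_prod]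
  have hDne : ∀ z : ℂ, ‖z‖ ≤ 1 → D.eval z ≠ 0 := by
    intro z hz
    rw [hDe]
    exact Finset.prod_ne_zero_iff.mpr fun j _ => one_sub_conj_mul_ne_zero (hα j) hz
  set T : Polynomial ℂ := Polynomial.C a * N + Polynomial.C b * D with hTdef
  set S : Polynomial ℂ := Polynomial.C c * N + Polynomial.C d * D with hSdef
  have hBval : ∀ z : ℂ, ‖z‖ < 1 → B z = N.eval z / D.eval z := by
    intro z hz
    rw [hB, hNe, hDe, Finset.prod_div_distrib, mul_div_assoc]
  have hMB : ∀ z : ℂ, ‖z‖ < 1 → M (B z) = T.eval z / S.eval z := by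
    intro z hz
    have hDz := hDne z hz.le
    rw [hM, hBval z hz]
    have h1 : a * (N.eval z / D.eval z) + b = T.eval z / D.eval z := by
      field_simp [hTdef]
      simp only [hTdef, hNdef, Polynomial.eval_add, Polynomial.eval_mul, Polynomial.eval_C]; ring
    have h2 : c * (N.eval z / D.eval z) + d = S.eval z / D.eval z := by
      field_simp [hSdef]
      simp only [hSdef, hNdef, Polynomial.eval_add, Polynomial.eval_mul, Polynomial.eval_C]; ring
    rw [h1, h2]
    rcases eq_or_ne (S.eval z) 0 with h | h
    · simp [h]
    · field_simp
  -- degenerate case S = 0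
  have hball : Set.Infinite {z : ℂ | ‖z‖ < 1} := by
    have : Metric.ball (0 : ℂ) 1 = {z : ℂ | ‖z‖ < 1} := by
      ext z; simp [Metric.mem_ball, dist_eq_norm]
    rw [← this]
    exact infinite_of_mem_nhds (0 : ℂ) (Metric.ball_mem_nhds 0 one_pos)
  by_cases hS0 : S = 0
  · have hPz : ∀ z : ℂ, ‖z‖ < 1 → P.eval z = 0 := by
      intro z hz
      have h := hR z hz
      rw [hMB z hz, hS0] at h
      simp at h
      rcases h with h | h
      · exact h
      · exact absurd h (hQ z hz.le)
    have : P = 0 := by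
      apply Polynomial.eq_zero_of_infinite_isRoot
      apply Set.Infinite.mono _ hball
      intro z hz; exact hPz z hz
    exact hP0 this
  -- main identity
  have hPSQT : P * S = Q * T := by
    have hsub : (P * S - Q * T) = 0 := by
      apply Polynomial.eq_zero_of_infinite_isRoot
      have hfin : Set.Finite {z : ℂ | S.IsRoot z} := Polynomial.finite_setOf_isRoot hS0
      apply Set.Infinite.mono (s := {z : ℂ | ‖z‖ < 1} \ {z : ℂ | S.IsRoot z})
      · rintro z ⟨hz, hSz⟩
        have hSz' : S.eval z ≠ 0 := hSz
        have h := hR z hz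
        rw [hMB z hz] at h
        have := (div_eq_div_iff (hQ z hz.le) hSz').mp h
        simp only [Set.mem_setOf_eq, Polynomial.IsRoot, Polynomial.eval_sub,
          Polynomial.eval_mul]
        linear_combination this
      · exact hball.diff hfin
    linear_combination hsub
  obtain ⟨z₀, hz₀, hPz₀⟩ := hzero
  have hQz₀ := hQ z₀ hz₀.le
  have hDz₀ := hDne z₀ hz₀.le
  have hTz₀ : T.eval z₀ = 0 := by
    have h := congrArg (Polynomial.eval z₀) hPSQT
    simp only [Polynomial.eval_mul, hPz₀, zero_mul] at h
    exact (mul_eq_zero.mp h.symm).resolve_left hQz₀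
  have ha : a ≠ 0 := by
    rintro rfl
    have hb : b ≠ 0 := by
      intro hb; rw [hb] at hdet; simp at hdet
    have : T.eval z₀ = b * D.eval z₀ := by simp [hTdef]
    rw [hTz₀] at this
    exact (mul_ne_zero hb hDz₀) this.symm
  set w : ℂ := -b / a with hwdef
  have haw : a * w = -b := by
    rw [hwdef]; field_simp
  have hNw : N.eval z₀ = w * D.eval z₀ := by
    have h : a * N.eval z₀ + b * D.eval z₀ = 0 := by
      have := hTz₀; simp [hTdef] at this; linear_combination this
    have h2 : a * Polynomial.eval z₀ N = a * (w * Polynomial.eval z₀ D) := by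
      rw [← mul_assoc, haw]; linear_combination h
    exact mul_left_cancel₀ ha h2
  have hwlt : ‖w‖ < 1 := by
    have h1 : ‖N.eval z₀‖ < ‖D.eval z₀‖ := by
      rw [hNe, hDe, norm_mul, hcc, one_mul, norm_prod, norm_prod]
      by_cases hex : ∃ j, α j = z₀
      · obtain ⟨j, hj⟩ := hex
        have : ∏ j, ‖α j - z₀‖ = 0 := by
          apply Finset.prod_eq_zero (Finset.mem_univ j)
          simp [hj]
        rw [this]
        apply Finset.prod_pos
        intro i _
        exact norm_pos_iff.mpr (one_sub_conj_mul_ne_zero (hα i) hz₀.le)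
      · push_neg at hex
        have : Nonempty (Fin Q.natDegree) := ⟨⟨0, hqpos⟩⟩
        apply Finset.prod_lt_prod_of_nonempty
        · intro i _
          exact norm_pos_iff.mpr (sub_ne_zero.mpr (hex i))
        · intro i _
          exact blaschke_factor_lt (hα i) hz₀
        · exact Finset.univ_nonempty
    have hw : w = N.eval z₀ / D.eval z₀ := by
      rw [hNw]; field_simp
    rw [hw, norm_div]
    rw [div_lt_one (norm_pos_iff.mpr hDz₀)]
    exact h1
  -- coefficient computations
  have hNc : N.coeff Q.natDegree = cc * (-1) ^ Q.natDegree := by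
    rw [hNdef, Polynomial.coeff_C_mul]
    congr 1
    have := Polynomial.coeff_prod_of_natDegree_le
      (s := (Finset.univ : Finset (Fin Q.natDegree)))
      (f := fun j => Polynomial.C (α j) - Polynomial.X) (n := 1) ?_
    · simpa using this
    · intro p _
      apply le_trans (Polynomial.natDegree_sub_le _ _)
      simp
  have hDc : D.coeff Q.natDegree = (-1) ^ Q.natDegree * ∏ j, (starRingEnd ℂ) (α j) := by
    rw [hDdef]
    have := Polynomial.coeff_prod_of_natDegree_le
      (s := (Finset.univ : Finset (Fin Q.natDegree)))
      (f := fun j => 1 - Polynomial.C ((starRingEnd ℂ) (α j)) * Polynomial.X) (n := 1) ?_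
    · simp only [Finset.card_univ, Fintype.card_fin, mul_one] at this
      rw [this]
      have hco : ∀ j : Fin Q.natDegree,
          (1 - Polynomial.C ((starRingEnd ℂ) (α j)) * Polynomial.X).coeff 1
            = -1 * (starRingEnd ℂ) (α j) := by
        intro j; simp [Polynomial.coeff_one]
      rw [Finset.prod_congr rfl (fun j _ => hco j), Finset.prod_mul_distrib,
        Finset.prod_const, Finset.card_univ, Fintype.card_fin]
    · intro p _
      apply le_trans (Polynomial.natDegree_sub_le _ _)
      simp only [max_le_iff]
      exact ⟨by simp, le_trans (Polynomial.natDegree_C_mul_le _ _) (by simp)⟩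
  have hNdeg : N.natDegree ≤ Q.natDegree := by
    apply le_trans (Polynomial.natDegree_C_mul_le _ _)
    apply le_trans (Polynomial.natDegree_prod_le _ _)
    apply le_trans (Finset.sum_le_card_nsmul _ _ 1 ?_)
    · simp
    · intro p _
      apply le_trans (Polynomial.natDegree_sub_le _ _)
      simp
  have hDdeg : D.natDegree ≤ Q.natDegree := by
    apply le_trans (Polynomial.natDegree_prod_le _ _)
    apply le_trans (Finset.sum_le_card_nsmul _ _ 1 ?_)
    · simp
    · intro p _
      apply le_trans (Polynomial.natDegree_sub_le _ _)
      simp only [max_le_iff]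
      exact ⟨by simp, le_trans (Polynomial.natDegree_C_mul_le _ _) (by simp)⟩
  set Wp : Polynomial ℂ := N - Polynomial.C w * D with hWdef
  have hWc : Wp.coeff Q.natDegree ≠ 0 := by
    rw [hWdef, Polynomial.coeff_sub, hNc, Polynomial.coeff_C_mul, hDc]
    have hprodle : ∏ j, ‖(starRingEnd ℂ) (α j)‖ ≤ 1 := by
      apply Finset.prod_le_one
      · intro i _; exact norm_nonneg _
      · intro i _; rw [RCLike.norm_conj]; exact (hα i).le
    have hne : cc ≠ w * ∏ j, (starRingEnd ℂ) (α j) := by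
      intro h
      have : ‖w * ∏ j, (starRingEnd ℂ) (α j)‖ < 1 := by
        rw [norm_mul, norm_prod]
        calc ‖w‖ * ∏ j, ‖(starRingEnd ℂ) (α j)‖
            ≤ ‖w‖ * 1 := mul_le_mul_of_nonneg_left hprodle (norm_nonneg _)
          _ = ‖w‖ := mul_one _
          _ < 1 := hwlt
      rw [← h, hcc] at this
      exact lt_irrefl _ this
    intro h
    apply hne
    have hm1 : ((-1 : ℂ)) ^ Q.natDegree ≠ 0 := by
      apply pow_ne_zero; norm_num
    have h' : cc * (-1) ^ Q.natDegree
        = (w * ∏ j, (starRingEnd ℂ) (α j)) * (-1) ^ Q.natDegree := by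
      linear_combination h
    exact mul_right_cancel₀ hm1 h'
  have hW0 : Wp ≠ 0 := fun h => hWc (by rw [h]; simp)
  have hWdeg : Wp.natDegree = Q.natDegree := by
    apply le_antisymm
    · apply le_trans (Polynomial.natDegree_sub_le _ _)
      simp only [max_le_iff]
      exact ⟨hNdeg, le_trans (Polynomial.natDegree_C_mul_le _ _) hDdeg⟩
    · exact Polynomial.le_natDegree_of_ne_zero hWc
  have hTW : T = Polynomial.C a * Wp := by
    rw [hTdef, hWdef]
    have hcw : Polynomial.C a * (Polynomial.C w * D) = Polynomial.C (-b) * D := by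
      rw [← mul_assoc, ← Polynomial.C_mul, haw]
    rw [mul_sub, hcw]
    simp only [Polynomial.C_neg]
    ring
  have hT0 : T ≠ 0 := by
    rw [hTW]
    exact mul_ne_zero (by simpa using ha) hW0
  have hTdeg : T.natDegree = Q.natDegree := by
    rw [hTW, Polynomial.natDegree_C_mul ha, hWdeg]
  have hSdeg : S.natDegree ≤ Q.natDegree := by
    apply le_trans (Polynomial.natDegree_add_le _ _)
    simp only [max_le_iff]
    exact ⟨le_trans (Polynomial.natDegree_C_mul_le _ _) hNdeg,
      le_trans (Polynomial.natDegree_C_mul_le _ _) hDdeg⟩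
  have hdeg1 : (P * S).natDegree = P.natDegree + S.natDegree :=
    Polynomial.natDegree_mul hP0 hS0
  have hdeg2 : (Q * T).natDegree = Q.natDegree + Q.natDegree := by
    rw [Polynomial.natDegree_mul hQ0 hT0, hTdeg]
  rw [hPSQT, hdeg2] at hdeg1
  omega
end
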